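/- arXiv:math/0503407 — 4 statements merged into one kernel-verified Lean document; each statement's English description precedes it below -/
import Mathlib

section
/- Let S be a partially ordered set with a simply connected extension (∼_u, ∼_l). Then for all a, b, c ∈ S, B_{a,b} ⊆ B_{a,c} ∪ B_{c,b}. -/
open Pointwise

namespace PaperSC

variable {S : Type*}

/-- Exactly one of four propositions holds. -/
def ExactlyOne4 (p q r s : Prop) : Prop :=
  (p ∨ q ∨ r ∨ s) ∧ (p → ¬q ∧ ¬r ∧ ¬s) ∧ (q → ¬r ∧ ¬s) ∧ (r → ¬s)

/-- `x` and `y` are incomparable with respect to the strict order `lt`. -/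
def Incomp (lt : S → S → Prop) (x y : S) : Prop :=
  x ≠ y ∧ ¬ lt x y ∧ ¬ lt y x

/-- The reflexive closure of `lt`. -/
def Le' (lt : S → S → Prop) (x y : S) : Prop := x = y ∨ lt x y

/-- `x ∼ᵤ y` : `x` and `y` are incomparable and have a common upper bound. -/
def SimU (lt : S → S → Prop) (x y : S) : Prop :=
  Incomp lt x y ∧ ∃ z, Le' lt x z ∧ Le' lt y z

/-- `x ∼ₗ y` : `x` and `y` are incomparable and have a common lower bound. -/
def SimL (lt : S → S → Prop) (x y : S) : Prop :=
  Incomp lt x y ∧ ∃ z, Le' lt z x ∧ Le' lt z y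

/-- Every incomparable pair has a common upper bound or a common lower bound. -/
def StronglyConnectedRel (lt : S → S → Prop) : Prop :=
  ∀ x y, Incomp lt x y → SimU lt x y ∨ SimL lt x y

/-- Acyclicity: `x ∼ᵤ y` and `x ∼ₗ z` imply `y < z`. -/
def AcyclicRel (lt : S → S → Prop) : Prop :=
  ∀ x y z, SimU lt x y → SimL lt x z → lt y z

/-- `(u, l)` is a simply connected extension of the strict partial order `lt`. -/
structure IsSCExt (lt u l : S → S → Prop) : Prop where
  u_symm : ∀ x y, u x y → u y x
  l_symm : ∀ x y, l x y → l y x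
  exactly_one : ∀ x y, x ≠ y → ExactlyOne4 (lt x y) (lt y x) (u x y) (l x y)
  u_of_ub : ∀ x y, Incomp lt x y → (∃ z, Le' lt x z ∧ Le' lt y z) → u x y
  l_of_lb : ∀ x y, Incomp lt x y → (∃ z, Le' lt z x ∧ Le' lt z y) → l x y
  acyclic : ∀ x y z, u x y → l x z → lt y z

/-- `b` is between `a` and `c` (with respect to `lt` and the extension `(u, l)`). -/
def Btwn (lt u l : S → S → Prop) (a c b : S) : Prop :=
  (lt a c ∧ ((lt a b ∧ lt b c) ∨ (u a b ∧ l b c))) ∨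
  (lt c a ∧ ((lt c b ∧ lt b a) ∨ (u c b ∧ l b a))) ∨
  (l a c ∧ ((l a b ∧ lt b c) ∨ (l c b ∧ lt b a))) ∨
  (u a c ∧ ((u a b ∧ lt c b) ∨ (u c b ∧ lt a b)))

/-- The between set `B_{a,b}`; it equals `{a}` when `a = b`. -/
def BSet (lt u l : S → S → Prop) (a b : S) : Set S :=
  {a, b} ∪ {x | a ≠ b ∧ Btwn lt u l a b x}

/-- The set `A` is totally ordered by `lt`. -/
def IsChainRel (lt : S → S → Prop) (A : Set S) : Prop :=
  ∀ p ∈ A, ∀ q ∈ A, p = q ∨ lt p q ∨ lt q p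

/-- `x O y` iff `B_{x,y}` is totally ordered by `lt`. -/
def ORel (lt u l : S → S → Prop) (x y : S) : Prop :=
  IsChainRel lt (BSet lt u l x y)

/-- The extension is rectifiable: every between set is a finite union of `O`-classes. -/
def Rectifiable (lt u l : S → S → Prop) : Prop :=
  ∀ a b : S, a ≠ b → ∃ F : Finset S,
    (↑F : Set S) ⊆ BSet lt u l a b ∧
    ∀ x ∈ BSet lt u l a b, ∃ c ∈ F, ORel lt u l x c

section Aux

variable {lt u l : S → S → Prop}

lemma rel4 (h : IsSCExt lt u l) {p q : S} (hne : p ≠ q) :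
    lt p q ∨ lt q p ∨ u p q ∨ l p q :=
  (h.exactly_one p q hne).1

lemma u_not (h : IsSCExt lt u l) {p q : S} (hne : p ≠ q) (hu : u p q) :
    ¬ lt p q ∧ ¬ lt q p ∧ ¬ l p q :=
  ⟨fun h' => ((h.exactly_one p q hne).2.1 h').2.1 hu,
   fun h' => ((h.exactly_one p q hne).2.2.1 h').1 hu,
   (h.exactly_one p q hne).2.2.2 hu⟩

lemma l_not (h : IsSCExt lt u l) {p q : S} (hne : p ≠ q) (hl : l p q) :
    ¬ lt p q ∧ ¬ lt q p ∧ ¬ u p q :=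
  ⟨fun h' => ((h.exactly_one p q hne).2.1 h').2.2 hl,
   fun h' => ((h.exactly_one p q hne).2.2.1 h').2 hl,
   fun h' => (h.exactly_one p q hne).2.2.2 h' hl⟩

lemma incomp_of_u (h : IsSCExt lt u l) {p q : S} (hne : p ≠ q) (hu : u p q) :
    Incomp lt p q :=
  ⟨hne, (u_not h hne hu).1, (u_not h hne hu).2.1⟩

lemma incomp_of_l (h : IsSCExt lt u l) {p q : S} (hne : p ≠ q) (hl : l p q) :
    Incomp lt p q :=
  ⟨hne, (l_not h hne hl).1, (l_not h hne hl).2.1⟩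

lemma u_no_lb (h : IsSCExt lt u l) {p q z : S} (hne : p ≠ q) (hu : u p q)
    (h1 : Le' lt z p) (h2 : Le' lt z q) : False :=
  (u_not h hne hu).2.2 (h.l_of_lb p q (incomp_of_u h hne hu) ⟨z, h1, h2⟩)

lemma l_no_ub (h : IsSCExt lt u l) {p q z : S} (hne : p ≠ q) (hl : l p q)
    (h1 : Le' lt p z) (h2 : Le' lt q z) : False :=
  (l_not h hne hl).2.2 (h.u_of_ub p q (incomp_of_l h hne hl) ⟨z, h1, h2⟩)

lemma btwn_symm (h : IsSCExt lt u l) {A C B : S} :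
    Btwn lt u l A C B → Btwn lt u l C A B := by
  rintro (⟨h1, h2⟩ | ⟨h1, h2⟩ | ⟨h1, h2⟩ | ⟨h1, h2⟩)
  · exact Or.inr (Or.inl ⟨h1, h2⟩)
  · exact Or.inl ⟨h1, h2⟩
  · exact Or.inr (Or.inr (Or.inl ⟨h.l_symm A C h1, h2.symm⟩))
  · exact Or.inr (Or.inr (Or.inr ⟨h.u_symm A C h1, h2.symm⟩))

end Aux

section Core

variable [PartialOrder S] {u l : S → S → Prop}

/-- Core case: `a < x < b`. -/
lemma case1a (h : IsSCExt ((· < ·) : S → S → Prop) u l) {a b c x : S}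
    (hac : a ≠ c) (hcb : c ≠ b) (hcx : c ≠ x)
    (hax : a < x) (hxb : x < b) :
    Btwn (· < ·) u l a c x ∨ Btwn (· < ·) u l c b x := by
  rcases rel4 h hcx with hcx' | hxc' | hu | hl
  · exact Or.inr (Or.inl ⟨lt_trans hcx' hxb, Or.inl ⟨hcx', hxb⟩⟩)
  · exact Or.inl (Or.inl ⟨lt_trans hax hxc', Or.inl ⟨hax, hxc'⟩⟩)
  · -- u c x
    have hnca : ¬ c < a := fun h' => (incomp_of_u h hcx hu).2.1 (lt_trans h' hax)
    have hnac : ¬ a < c := fun h' => u_no_lb h hcx hu (Or.inr h') (Or.inr hax)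
    have hnl : ¬ l a c := fun h' =>
      absurd (h.acyclic c x a hu (h.l_symm a c h')) (lt_asymm hax)
    have huac : u a c := by
      rcases rel4 h hac with h1 | h1 | h1 | h1
      · exact absurd h1 hnac
      · exact absurd h1 hnca
      · exact h1
      · exact absurd h1 hnl
    exact Or.inl (Or.inr (Or.inr (Or.inr ⟨huac, Or.inr ⟨hu, hax⟩⟩)))
  · -- l c x
    have hnbc : ¬ b < c := fun h' => (incomp_of_l h hcx hl).2.2 (lt_trans hxb h')
    have hncb : ¬ c < b := fun h' => l_no_ub h hcx hl (Or.inr h') (Or.inr hxb)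
    have hnu : ¬ u c b := fun h' => absurd (h.acyclic c b x h' hl) (lt_asymm hxb)
    have hlcb : l c b := by
      rcases rel4 h hcb with h1 | h1 | h1 | h1
      · exact absurd h1 hncb
      · exact absurd h1 hnbc
      · exact absurd h1 hnu
      · exact h1
    exact Or.inr (Or.inr (Or.inr (Or.inl ⟨hlcb, Or.inl ⟨hl, hxb⟩⟩)))

/-- Core case: `a < b`, `a ∼ᵤ x`, `x ∼ₗ b`. -/
lemma case1b (h : IsSCExt ((· < ·) : S → S → Prop) u l) {a b c x : S}
    (hax : a ≠ x) (hxb : x ≠ b) (hac : a ≠ c) (hcb : c ≠ b) (hcx : c ≠ x)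
    (hu : u a x) (hl : l x b) :
    Btwn (· < ·) u l a c x ∨ Btwn (· < ·) u l c b x := by
  rcases rel4 h hcx with hcx' | hxc' | hu' | hl'
  · -- c < x : show u a c
    have hnac : ¬ a < c := fun h' => (incomp_of_u h hax hu).2.1 (lt_trans h' hcx')
    have hnca : ¬ c < a := fun h' => u_no_lb h hax hu (Or.inr h') (Or.inr hcx')
    have hnl : ¬ l a c := fun h' => absurd (h.acyclic a x c hu h') (lt_asymm hcx')
    have huac : u a c := by
      rcases rel4 h hac with h1 | h1 | h1 | h1
      · exact absurd h1 hnac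
      · exact absurd h1 hnca
      · exact h1
      · exact absurd h1 hnl
    exact Or.inl (Or.inr (Or.inr (Or.inr ⟨huac, Or.inl ⟨hu, hcx'⟩⟩)))
  · -- x < c : show l c b
    have hnbc : ¬ b < c := fun h' => l_no_ub h hxb hl (Or.inr hxc') (Or.inr h')
    have hncb : ¬ c < b := fun h' => (incomp_of_l h hxb hl).2.1 (lt_trans hxc' h')
    have hnu : ¬ u c b := fun h' =>
      absurd (h.acyclic b c x (h.u_symm c b h') (h.l_symm x b hl)) (lt_asymm hxc')
    have hlcb : l c b := by
      rcases rel4 h hcb with h1 | h1 | h1 | h1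
      · exact absurd h1 hncb
      · exact absurd h1 hnbc
      · exact absurd h1 hnu
      · exact h1
    exact Or.inr (Or.inr (Or.inr (Or.inl ⟨hlcb, Or.inr ⟨h.l_symm x b hl, hxc'⟩⟩)))
  · -- u c x
    have hcb' : c < b := h.acyclic x c b (h.u_symm c x hu') hl
    exact Or.inr (Or.inl ⟨hcb', Or.inr ⟨hu', hl⟩⟩)
  · -- l c x
    have hac' : a < c := h.acyclic x a c (h.u_symm a x hu) (h.l_symm c x hl')
    exact Or.inl (Or.inl ⟨hac', Or.inr ⟨hu, h.l_symm c x hl'⟩⟩)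

/-- Core case: `a ∼ₗ x`, `x < b`. -/
lemma case3a (h : IsSCExt ((· < ·) : S → S → Prop) u l) {a b c x : S}
    (hax : a ≠ x) (hac : a ≠ c) (hcb : c ≠ b) (hcx : c ≠ x)
    (hlax : l a x) (hxb : x < b) :
    Btwn (· < ·) u l a c x ∨ Btwn (· < ·) u l c b x := by
  rcases rel4 h hcx with hcx' | hxc' | hu' | hl'
  · exact Or.inr (Or.inl ⟨lt_trans hcx' hxb, Or.inl ⟨hcx', hxb⟩⟩)
  · -- x < c : show l a c
    have hnac : ¬ a < c := fun h' => l_no_ub h hax hlax (Or.inr h') (Or.inr hxc')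
    have hnca : ¬ c < a := fun h' => (incomp_of_l h hax hlax).2.2 (lt_trans hxc' h')
    have hnu : ¬ u a c := fun h' => absurd (h.acyclic a c x h' hlax) (lt_asymm hxc')
    have hlac : l a c := by
      rcases rel4 h hac with h1 | h1 | h1 | h1
      · exact absurd h1 hnac
      · exact absurd h1 hnca
      · exact absurd h1 hnu
      · exact h1
    exact Or.inl (Or.inr (Or.inr (Or.inl ⟨hlac, Or.inl ⟨hlax, hxc'⟩⟩)))
  · -- u c x
    have hca : c < a := h.acyclic x c a (h.u_symm c x hu') (h.l_symm a x hlax)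
    exact Or.inl (Or.inr (Or.inl ⟨hca, Or.inr ⟨hu', h.l_symm a x hlax⟩⟩))
  · -- l c x : show l c b
    have hncb : ¬ c < b := fun h' => l_no_ub h hcx hl' (Or.inr h') (Or.inr hxb)
    have hnbc : ¬ b < c := fun h' => (incomp_of_l h hcx hl').2.2 (lt_trans hxb h')
    have hnu : ¬ u c b := fun h' => absurd (h.acyclic c b x h' hl') (lt_asymm hxb)
    have hlcb : l c b := by
      rcases rel4 h hcb with h1 | h1 | h1 | h1
      · exact absurd h1 hncb
      · exact absurd h1 hnbc
      · exact absurd h1 hnu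
      · exact h1
    exact Or.inr (Or.inr (Or.inr (Or.inl ⟨hlcb, Or.inl ⟨hl', hxb⟩⟩)))

/-- Core case: `a ∼ᵤ x`, `b < x`. -/
lemma case4a (h : IsSCExt ((· < ·) : S → S → Prop) u l) {a b c x : S}
    (hax : a ≠ x) (hac : a ≠ c) (hcb : c ≠ b) (hcx : c ≠ x)
    (huax : u a x) (hbx : b < x) :
    Btwn (· < ·) u l a c x ∨ Btwn (· < ·) u l c b x := by
  rcases rel4 h hcx with hcx' | hxc' | hu' | hl'
  · -- c < x : show u a c
    have hnca : ¬ c < a := fun h' => u_no_lb h hax huax (Or.inr h') (Or.inr hcx')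
    have hnac : ¬ a < c := fun h' => (incomp_of_u h hax huax).2.1 (lt_trans h' hcx')
    have hnl : ¬ l a c := fun h' => absurd (h.acyclic a x c huax h') (lt_asymm hcx')
    have huac : u a c := by
      rcases rel4 h hac with h1 | h1 | h1 | h1
      · exact absurd h1 hnac
      · exact absurd h1 hnca
      · exact h1
      · exact absurd h1 hnl
    exact Or.inl (Or.inr (Or.inr (Or.inr ⟨huac, Or.inl ⟨huax, hcx'⟩⟩)))
  · exact Or.inr (Or.inr (Or.inl ⟨lt_trans hbx hxc', Or.inl ⟨hbx, hxc'⟩⟩))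
  · -- u c x : show u c b
    have hnbc : ¬ b < c := fun h' => u_no_lb h hcx hu' (Or.inr h') (Or.inr hbx)
    have hncb : ¬ c < b := fun h' => (incomp_of_u h hcx hu').2.1 (lt_trans h' hbx)
    have hnl : ¬ l c b := fun h' => absurd (h.acyclic c x b hu' h') (lt_asymm hbx)
    have hucb : u c b := by
      rcases rel4 h hcb with h1 | h1 | h1 | h1
      · exact absurd h1 hncb
      · exact absurd h1 hnbc
      · exact h1
      · exact absurd h1 hnl
    exact Or.inr (Or.inr (Or.inr (Or.inr ⟨hucb, Or.inl ⟨hu', hbx⟩⟩)))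
  · -- l c x
    have hac' : a < c := h.acyclic x a c (h.u_symm a x huax) (h.l_symm c x hl')
    exact Or.inl (Or.inl ⟨hac', Or.inr ⟨huax, h.l_symm c x hl'⟩⟩)

lemma key (h : IsSCExt ((· < ·) : S → S → Prop) u l) {a b c x : S}
    (hab : a ≠ b) (hax : a ≠ x) (hxb : x ≠ b) (hac : a ≠ c) (hcb : c ≠ b) (hcx : c ≠ x)
    (hb : Btwn (· < ·) u l a b x) :
    Btwn (· < ·) u l a c x ∨ Btwn (· < ·) u l c b x := by
  rcases hb with ⟨h1, h2⟩ | ⟨h1, h2⟩ | ⟨h1, h2⟩ | ⟨h1, h2⟩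
  · rcases h2 with ⟨p, q⟩ | ⟨p, q⟩
    · exact case1a h hac hcb hcx p q
    · exact case1b h hax hxb hac hcb hcx p q
  · rcases h2 with ⟨p, q⟩ | ⟨p, q⟩
    · rcases case1a h hcb.symm hac.symm hcx p q with hh | hh
      · exact Or.inr (btwn_symm h hh)
      · exact Or.inl (btwn_symm h hh)
    · rcases case1b h (fun e => hxb e.symm) (fun e => hax e.symm) hcb.symm hac.symm hcx p q
        with hh | hh
      · exact Or.inr (btwn_symm h hh)
      · exact Or.inl (btwn_symm h hh)
  · rcases h2 with ⟨p, q⟩ | ⟨p, q⟩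
    · exact case3a h hax hac hcb hcx p q
    · rcases case3a h (fun e => hxb e.symm) hcb.symm hac.symm hcx p q with hh | hh
      · exact Or.inr (btwn_symm h hh)
      · exact Or.inl (btwn_symm h hh)
  · rcases h2 with ⟨p, q⟩ | ⟨p, q⟩
    · exact case4a h hax hac hcb hcx p q
    · rcases case4a h (fun e => hxb e.symm) hcb.symm hac.symm hcx p q with hh | hh
      · exact Or.inr (btwn_symm h hh)
      · exact Or.inl (btwn_symm h hh)

end Core

/-- `B_{a,b} ⊆ B_{a,c} ∪ B_{c,b}` for all `a, b, c`. -/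
theorem stmt2 {S : Type*} [PartialOrder S] (u l : S → S → Prop)
    (hsce : IsSCExt ((· < ·) : S → S → Prop) u l) (a b c : S) :
    BSet ((· < ·) : S → S → Prop) u l a b ⊆
      BSet ((· < ·) : S → S → Prop) u l a c ∪ BSet ((· < ·) : S → S → Prop) u l c b := by
  intro x hx
  by_cases hxc : x = c
  · subst hxc
    exact Or.inl (Or.inl (Or.inr rfl))
  by_cases hxa : x = a
  · subst hxa
    exact Or.inl (Or.inl (Or.inl rfl))
  by_cases hxb : x = b
  · subst hxb
    exact Or.inr (Or.inl (Or.inr rfl))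
  rcases hx with hmem | ⟨hab, hb⟩
  · rcases hmem with h1 | h1
    · exact absurd h1 hxa
    · exact absurd h1 hxb
  by_cases hca : c = a
  · subst hca
    exact Or.inr (Or.inr ⟨hab, hb⟩)
  by_cases hcb : c = b
  · subst hcb
    exact Or.inl (Or.inr ⟨hab, hb⟩)
  rcases key hsce hab (fun e => hxa e.symm) hxb (fun e => hca e.symm) hcb
      (fun e => hxc e.symm) hb with hh | hh
  · exact Or.inl (Or.inr ⟨fun e => hca e.symm, hh⟩)
  · exact Or.inr (Or.inr ⟨hcb, hh⟩)

end PaperSC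
end

section
/- Let S be a partially ordered set with a simply connected extension (∼_u, ∼_l). If a, b, c ∈ S and c ∈ B_{a,b}, then B_{a,c} ∩ B_{c,b} = {c}. -/
open Pointwise

namespace PaperSC

variable {S : Type*}

section Aux

variable {S : Type*} [PartialOrder S] {u l : S → S → Prop}

lemma nu_lt (h : IsSCExt ((· < ·) : S → S → Prop) u l) {x y : S}
    (hu : u x y) (hlt : x < y) : False :=
  ((h.exactly_one x y (ne_of_lt hlt)).2.1 hlt).2.1 hu

lemma nu_gt (h : IsSCExt ((· < ·) : S → S → Prop) u l) {x y : S}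
    (hu : u x y) (hlt : y < x) : False :=
  ((h.exactly_one x y (ne_of_gt hlt)).2.2.1 hlt).1 hu

lemma nl_lt (h : IsSCExt ((· < ·) : S → S → Prop) u l) {x y : S}
    (hl : l x y) (hlt : x < y) : False :=
  ((h.exactly_one x y (ne_of_lt hlt)).2.1 hlt).2.2 hl

lemma nl_gt (h : IsSCExt ((· < ·) : S → S → Prop) u l) {x y : S}
    (hl : l x y) (hlt : y < x) : False :=
  ((h.exactly_one x y (ne_of_gt hlt)).2.2.1 hlt).2 hl

lemma nul (h : IsSCExt ((· < ·) : S → S → Prop) u l) {x y : S}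
    (hne : x ≠ y) (hu : u x y) (hl : l x y) : False :=
  (h.exactly_one x y hne).2.2.2 hu hl

lemma btwn_symm_s4 (h : IsSCExt ((· < ·) : S → S → Prop) u l) {a c x : S}
    (hb : Btwn (· < ·) u l a c x) : Btwn (· < ·) u l c a x := by
  rcases hb with ⟨h1, h2⟩ | ⟨h1, h2⟩ | ⟨h1, h2⟩ | ⟨h1, h2⟩
  · exact Or.inr (Or.inl ⟨h1, h2⟩)
  · exact Or.inl ⟨h1, h2⟩
  · exact Or.inr (Or.inr (Or.inl ⟨h.l_symm _ _ h1, h2.symm⟩))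
  · exact Or.inr (Or.inr (Or.inr ⟨h.u_symm _ _ h1, h2.symm⟩))

lemma btwn_of_lt (h : IsSCExt ((· < ·) : S → S → Prop) u l) {a c x : S}
    (hac : a < c) (hb : Btwn (· < ·) u l a c x) :
    (a < x ∧ x < c) ∨ (u a x ∧ l x c) := by
  rcases hb with ⟨_, h2⟩ | ⟨h1, _⟩ | ⟨h1, _⟩ | ⟨h1, _⟩
  · exact h2
  · exact (lt_asymm hac h1).elim
  · exact (nl_lt h h1 hac).elim
  · exact (nu_lt h h1 hac).elim

lemma btwn_of_l (h : IsSCExt ((· < ·) : S → S → Prop) u l) {a c x : S}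
    (hne : a ≠ c) (hac : l a c) (hb : Btwn (· < ·) u l a c x) :
    (l a x ∧ x < c) ∨ (l c x ∧ x < a) := by
  rcases hb with ⟨h1, _⟩ | ⟨h1, _⟩ | ⟨_, h2⟩ | ⟨h1, _⟩
  · exact (nl_lt h hac h1).elim
  · exact (nl_gt h hac h1).elim
  · exact h2
  · exact (nul h hne h1 hac).elim

lemma btwn_of_u (h : IsSCExt ((· < ·) : S → S → Prop) u l) {a c x : S}
    (hne : a ≠ c) (hac : u a c) (hb : Btwn (· < ·) u l a c x) :
    (u a x ∧ c < x) ∨ (u c x ∧ a < x) := by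
  rcases hb with ⟨h1, _⟩ | ⟨h1, _⟩ | ⟨h1, _⟩ | ⟨_, h2⟩
  · exact (nu_lt h hac h1).elim
  · exact (nu_gt h hac h1).elim
  · exact (nul h hne hac h1).elim
  · exact h2

lemma mem_bset {a c x : S} :
    x ∈ BSet ((· < ·) : S → S → Prop) u l a c ↔
      x = a ∨ x = c ∨ (a ≠ c ∧ Btwn (· < ·) u l a c x) := by
  simp [BSet, Set.mem_union, Set.mem_insert_iff, Set.mem_setOf_eq, or_assoc]

lemma bset_flip (h : IsSCExt ((· < ·) : S → S → Prop) u l) {a c x : S}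
    (hx : x = a ∨ x = c ∨ (a ≠ c ∧ Btwn (· < ·) u l a c x)) :
    x = c ∨ x = a ∨ (c ≠ a ∧ Btwn (· < ·) u l c a x) := by
  rcases hx with h1 | h1 | ⟨h1, h2⟩
  · exact Or.inr (Or.inl h1)
  · exact Or.inl h1
  · exact Or.inr (Or.inr ⟨h1.symm, btwn_symm_s4 h h2⟩)

lemma coreA (h : IsSCExt ((· < ·) : S → S → Prop) u l) {a b c x : S}
    (hab : a < b) (hac : a < c) (hcb : c < b)
    (hx1 : x = a ∨ x = c ∨ (a ≠ c ∧ Btwn (· < ·) u l a c x))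
    (hx2 : x = c ∨ x = b ∨ (c ≠ b ∧ Btwn (· < ·) u l c b x)) : x = c := by
  by_cases hxc : x = c
  · exact hxc
  rcases hx1 with rfl | rfl | ⟨-, hb1⟩
  · rcases hx2 with h1 | h1 | ⟨-, hb2⟩
    · exact h1
    · exact absurd h1 hab.ne
    · rcases btwn_of_lt h hcb hb2 with ⟨h1, -⟩ | ⟨h1, -⟩
      · exact (lt_asymm hac h1).elim
      · exact (nu_gt h h1 hac).elim
  · rfl
  rcases btwn_of_lt h hac hb1 with ⟨h1, h2⟩ | ⟨h1, h2⟩ <;>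
    rcases hx2 with rfl | rfl | ⟨-, hb2⟩
  · rfl
  · exact (lt_asymm hcb h2).elim
  · rcases btwn_of_lt h hcb hb2 with ⟨h3, -⟩ | ⟨h3, -⟩
    · exact (lt_asymm h2 h3).elim
    · exact (nu_gt h h3 h2).elim
  · rfl
  · exact (nu_lt h h1 hab).elim
  · rcases btwn_of_lt h hcb hb2 with ⟨h3, -⟩ | ⟨h3, h4⟩
    · exact (nl_gt h h2 h3).elim
    · exact (nul h (fun e => hxc e.symm) h3 (h.l_symm _ _ h2)).elim

lemma coreB (h : IsSCExt ((· < ·) : S → S → Prop) u l) {a b c x : S}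
    (hab : a < b) (hnac : a ≠ c) (hncb : c ≠ b) (huac : u a c) (hlcb : l c b)
    (hx1 : x = a ∨ x = c ∨ (a ≠ c ∧ Btwn (· < ·) u l a c x))
    (hx2 : x = c ∨ x = b ∨ (c ≠ b ∧ Btwn (· < ·) u l c b x)) : x = c := by
  by_cases hxc : x = c
  · exact hxc
  rcases hx1 with rfl | rfl | ⟨-, hb1⟩
  · rcases hx2 with h1 | h1 | ⟨-, hb2⟩
    · exact h1
    · exact absurd h1 hab.ne
    · rcases btwn_of_l h hncb hlcb hb2 with ⟨h1, -⟩ | ⟨-, h2⟩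
      · exact (nul h hnac huac (h.l_symm _ _ h1)).elim
      · exact (nu_lt h huac h2).elim
  · rfl
  rcases btwn_of_u h hnac huac hb1 with ⟨h1, h2⟩ | ⟨h1, h2⟩ <;>
    rcases hx2 with rfl | rfl | ⟨-, hb2⟩
  · rfl
  · exact (nu_lt h h1 hab).elim
  · rcases btwn_of_l h hncb hlcb hb2 with ⟨h3, -⟩ | ⟨-, h4⟩
    · exact (nl_lt h h3 h2).elim
    · exact (lt_asymm h2 h4).elim
  · rfl
  · exact (nul h hncb h1 hlcb).elim
  · rcases btwn_of_l h hncb hlcb hb2 with ⟨h3, -⟩ | ⟨-, h4⟩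
    · exact (nul h (fun e => hxc e.symm) h1 h3).elim
    · exact (nu_gt h h1 h4).elim

lemma coreC (h : IsSCExt ((· < ·) : S → S → Prop) u l) {a b c x : S}
    (hnab : a ≠ b) (hnac : a ≠ c) (hlab : l a b) (hlac : l a c) (hcb : c < b)
    (hx1 : x = a ∨ x = c ∨ (a ≠ c ∧ Btwn (· < ·) u l a c x))
    (hx2 : x = c ∨ x = b ∨ (c ≠ b ∧ Btwn (· < ·) u l c b x)) : x = c := by
  by_cases hxc : x = c
  · exact hxc
  rcases hx1 with rfl | rfl | ⟨-, hb1⟩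
  · rcases hx2 with h1 | h1 | ⟨-, hb2⟩
    · exact h1
    · exact absurd h1 hnab
    · rcases btwn_of_lt h hcb hb2 with ⟨h1, -⟩ | ⟨h1, -⟩
      · exact (nl_gt h hlac h1).elim
      · exact (nul h hnac.symm h1 (h.l_symm _ _ hlac)).elim
  · rfl
  rcases btwn_of_l h hnac hlac hb1 with ⟨h1, h2⟩ | ⟨h1, h2⟩ <;>
    rcases hx2 with rfl | rfl | ⟨-, hb2⟩
  · rfl
  · exact (lt_asymm hcb h2).elim
  · rcases btwn_of_lt h hcb hb2 with ⟨h3, -⟩ | ⟨h3, -⟩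
    · exact (lt_asymm h2 h3).elim
    · exact (nu_gt h h3 h2).elim
  · rfl
  · exact (nl_lt h h1 hcb).elim
  · rcases btwn_of_lt h hcb hb2 with ⟨h3, -⟩ | ⟨h3, -⟩
    · exact (nl_lt h h1 h3).elim
    · exact (nul h (fun e => hxc e.symm) h3 h1).elim

lemma coreD (h : IsSCExt ((· < ·) : S → S → Prop) u l) {a b c x : S}
    (hnab : a ≠ b) (hnac : a ≠ c) (huab : u a b) (huac : u a c) (hbc : b < c)
    (hx1 : x = a ∨ x = c ∨ (a ≠ c ∧ Btwn (· < ·) u l a c x))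
    (hx2 : x = c ∨ x = b ∨ (c ≠ b ∧ Btwn (· < ·) u l c b x)) : x = c := by
  by_cases hxc : x = c
  · exact hxc
  rcases hx1 with rfl | rfl | ⟨-, hb1⟩
  · rcases hx2 with h1 | h1 | ⟨-, hb2⟩
    · exact h1
    · exact absurd h1 hnab
    · rcases btwn_of_lt h hbc (btwn_symm_s4 h hb2) with ⟨-, h2⟩ | ⟨-, h2⟩
      · exact (nu_lt h huac h2).elim
      · exact (nul h hnac huac h2).elim
  · rfl
  rcases btwn_of_u h hnac huac hb1 with ⟨h1, h2⟩ | ⟨h1, h2⟩ <;>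
    rcases hx2 with rfl | rfl | ⟨-, hb2⟩
  · rfl
  · exact (lt_asymm hbc h2).elim
  · rcases btwn_of_lt h hbc (btwn_symm_s4 h hb2) with ⟨-, h4⟩ | ⟨-, h4⟩
    · exact (lt_asymm h2 h4).elim
    · exact (nl_gt h h4 h2).elim
  · rfl
  · exact (nu_gt h h1 hbc).elim
  · rcases btwn_of_lt h hbc (btwn_symm_s4 h hb2) with ⟨-, h4⟩ | ⟨-, h4⟩
    · exact (nu_gt h h1 h4).elim
    · exact (nul h (fun e => hxc e.symm) h1 (h.l_symm _ _ h4)).elim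

lemma key_s4 (h : IsSCExt ((· < ·) : S → S → Prop) u l) {a b c x : S}
    (hnab : a ≠ b) (hnca : c ≠ a) (hncb : c ≠ b)
    (hc : Btwn (· < ·) u l a b c)
    (hx1 : x ∈ BSet ((· < ·) : S → S → Prop) u l a c)
    (hx2 : x ∈ BSet ((· < ·) : S → S → Prop) u l c b) : x = c := by
  rw [mem_bset] at hx1 hx2
  rcases hc with ⟨hab, hin⟩ | ⟨hba, hin⟩ | ⟨hlab, hin⟩ | ⟨huab, hin⟩
  · rcases hin with ⟨h1, h2⟩ | ⟨h1, h2⟩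
    · exact coreA h hab h1 h2 hx1 hx2
    · exact coreB h hab hnca.symm hncb h1 h2 hx1 hx2
  · rcases hin with ⟨h1, h2⟩ | ⟨h1, h2⟩
    · exact coreA h hba h1 h2 (bset_flip h hx2) (bset_flip h hx1)
    · exact coreB h hba hncb.symm hnca h1 h2 (bset_flip h hx2) (bset_flip h hx1)
  · rcases hin with ⟨h1, h2⟩ | ⟨h1, h2⟩
    · exact coreC h hnab hnca.symm hlab h1 h2 hx1 hx2
    · exact coreC h hnab.symm hncb.symm (h.l_symm _ _ hlab) h1 h2
        (bset_flip h hx2) (bset_flip h hx1)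
  · rcases hin with ⟨h1, h2⟩ | ⟨h1, h2⟩
    · exact coreD h hnab hnca.symm huab h1 h2 hx1 hx2
    · exact coreD h hnab.symm hncb.symm (h.u_symm _ _ huab) h1 h2
        (bset_flip h hx2) (bset_flip h hx1)

end Aux

/-- If `c ∈ B_{a,b}` then `B_{a,c} ∩ B_{c,b} = {c}`. -/
theorem stmt4 {S : Type*} [PartialOrder S] (u l : S → S → Prop)
    (hsce : IsSCExt ((· < ·) : S → S → Prop) u l) (a b c : S)
    (hc : c ∈ BSet ((· < ·) : S → S → Prop) u l a b) :
    BSet ((· < ·) : S → S → Prop) u l a c ∩ BSet ((· < ·) : S → S → Prop) u l c b = {c} := by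
  ext x
  simp only [Set.mem_inter_iff, Set.mem_singleton_iff]
  constructor
  · rintro ⟨hx1, hx2⟩
    by_cases hca : c = a
    · subst hca
      rw [mem_bset] at hx1
      rcases hx1 with h1 | h1 | ⟨h1, -⟩
      · exact h1
      · exact h1
      · exact absurd rfl h1
    by_cases hcb : c = b
    · subst hcb
      rw [mem_bset] at hx2
      rcases hx2 with h1 | h1 | ⟨h1, -⟩
      · exact h1
      · exact h1
      · exact absurd rfl h1
    rw [mem_bset] at hc
    rcases hc with h1 | h1 | ⟨hnab, hbc⟩
    · exact absurd h1 hca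
    · exact absurd h1 hcb
    · exact key_s4 hsce hnab hca hcb hbc hx1 hx2
  · rintro rfl
    exact ⟨mem_bset.mpr (Or.inr (Or.inl rfl)), mem_bset.mpr (Or.inl rfl)⟩

end PaperSC
end

section
/- Let S be a partially ordered set with a simply connected extension (∼_u, ∼_l). If a, b, c, d ∈ S with b ≠ c, b ∈ B_{a,c} and c ∈ B_{b,d}, then b ∈ B_{a,d} and c ∈ B_{a,d}. -/
open Pointwise

namespace PaperSC

variable {S : Type*}

/-- If `b ≠ c`, `b ∈ B_{a,c}` and `c ∈ B_{b,d}`, then `b, c ∈ B_{a,d}`. -/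
theorem stmt5 {S : Type*} [PartialOrder S] (u l : S → S → Prop)
    (hsce : IsSCExt ((· < ·) : S → S → Prop) u l) (a b c d : S)
    (hbc : b ≠ c)
    (hb : b ∈ BSet ((· < ·) : S → S → Prop) u l a c)
    (hc : c ∈ BSet ((· < ·) : S → S → Prop) u l b d) :
    b ∈ BSet ((· < ·) : S → S → Prop) u l a d ∧
      c ∈ BSet ((· < ·) : S → S → Prop) u l a d := by
  obtain ⟨usymm, lsymm, eo, uub, llb, acyc⟩ := hsce
  have notu : ∀ {x y : S}, x < y → ¬ u x y := fun {x y} h hu =>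
    ((eo x y (ne_of_lt h)).2.1 h).2.1 hu
  have notl : ∀ {x y : S}, x < y → ¬ l x y := fun {x y} h hl =>
    ((eo x y (ne_of_lt h)).2.1 h).2.2 hl
  have notu' : ∀ {x y : S}, x < y → ¬ u y x := fun {x y} h hu =>
    ((eo y x (ne_of_gt h)).2.2.1 h).1 hu
  have notl' : ∀ {x y : S}, x < y → ¬ l y x := fun {x y} h hl =>
    ((eo y x (ne_of_gt h)).2.2.1 h).2 hl
  have incU : ∀ {x y : S}, x ≠ y → u x y → Incomp ((· < ·) : S → S → Prop) x y :=
    fun {x y} hne hu => ⟨hne, fun h => notu h hu, fun h => notu' h hu⟩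
  have incL : ∀ {x y : S}, x ≠ y → l x y → Incomp ((· < ·) : S → S → Prop) x y :=
    fun {x y} hne hl => ⟨hne, fun h => notl h hl, fun h => notl' h hl⟩
  simp only [BSet, Set.mem_union, Set.mem_insert_iff, Set.mem_singleton_iff,
    Set.mem_setOf_eq] at hb hc ⊢
  by_cases hba : b = a
  · subst hba
    exact ⟨Or.inl (Or.inl rfl), hc⟩
  by_cases hcd : c = d
  · subst hcd
    exact ⟨hb, Or.inl (Or.inr rfl)⟩
  rcases hb with (rfl | rfl) | ⟨hac, HB⟩
  · exact absurd rfl hba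
  · exact absurd rfl hbc
  rcases hc with (rfl | rfl) | ⟨hbd, HC⟩
  · exact absurd rfl (Ne.symm hbc)
  · exact absurd rfl hcd
  unfold Btwn at HB HC
  rcases HB with ⟨hac2, ⟨hab, hbc2⟩ | ⟨huab, hlbc⟩⟩ | ⟨hca, ⟨hcb, hba2⟩ | ⟨hucb, hlba⟩⟩ |
    ⟨hlac, ⟨hlab, hbc2⟩ | ⟨hlcb, hba2⟩⟩ | ⟨huac, ⟨huab, hcb⟩ | ⟨hucb, hab⟩⟩
  · -- A1 : a < c, a < b, b < c
    rcases HC with ⟨hbd2, ⟨hbc3, hcd2⟩ | ⟨hubc, hlcd⟩⟩ | ⟨hdb, ⟨hdc, hcb3⟩ | ⟨hudc, hlcb2⟩⟩ |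
      ⟨hlbd, ⟨hlbc2, hcd2⟩ | ⟨hldc, hcb3⟩⟩ | ⟨hubd, ⟨hubc, hdc⟩ | ⟨hudc, hbc3⟩⟩
    · -- B1
      have had : a < d := hab.trans hbd2
      exact ⟨Or.inr ⟨ne_of_lt had, Or.inl ⟨had, Or.inl ⟨hab, hbd2⟩⟩⟩,
        Or.inr ⟨ne_of_lt had, Or.inl ⟨had, Or.inl ⟨hac2, hcd2⟩⟩⟩⟩
    · exact absurd hubc (notu hbc2)
    · exact absurd hcb3 (lt_asymm hbc2)
    · exact absurd hlcb2 (notl' hbc2)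
    · exact absurd hlbc2 (notl hbc2)
    · exact absurd hcb3 (lt_asymm hbc2)
    · exact absurd hubc (notu hbc2)
    · -- B8 : u b d, u d c, b < c
      have hnad : a ≠ d := by rintro rfl; exact notu' hab hubd
      have hnlt : ¬ a < d := fun h =>
        (eo b d hbd).2.2.2 hubd (llb b d (incU hbd hubd) ⟨a, Or.inr hab, Or.inr h⟩)
      have hnlt2 : ¬ d < a := fun h => (incU hbd hubd).2.2 (h.trans hab)
      have huad : u a d := by
        rcases (eo a d hnad).1 with h | h | h | h
        · exact absurd h hnlt
        · exact absurd h hnlt2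
        · exact h
        · exact absurd (acyc d c a hudc (lsymm a d h)) (lt_asymm (hab.trans hbc2))
      exact ⟨Or.inr ⟨hnad, Or.inr (Or.inr (Or.inr ⟨huad, Or.inr ⟨usymm b d hubd, hab⟩⟩))⟩,
        Or.inr ⟨hnad, Or.inr (Or.inr (Or.inr ⟨huad, Or.inr ⟨hudc, hab.trans hbc2⟩⟩))⟩⟩
  · -- A2 : a < c, u a b, l b c
    rcases HC with ⟨hbd2, ⟨hbc3, hcd2⟩ | ⟨hubc, hlcd⟩⟩ | ⟨hdb, ⟨hdc, hcb3⟩ | ⟨hudc, hlcb2⟩⟩ |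
      ⟨hlbd, ⟨hlbc2, hcd2⟩ | ⟨hldc, hcb3⟩⟩ | ⟨hubd, ⟨hubc, hdc⟩ | ⟨hudc, hbc3⟩⟩
    · exact absurd hlbc (notl hbc3)
    · exact absurd hlbc ((eo b c hbc).2.2.2 hubc)
    · exact absurd hlbc (notl' hcb3)
    · -- B4 : d < b, u d c, l c b
      have hnad : a ≠ d := by rintro rfl; exact notu hdb huab
      have hnlt : ¬ a < d := fun h => (incU (Ne.symm hba) huab).2.1 (h.trans hdb)
      have hnlt2 : ¬ d < a := fun h =>
        (eo a b (Ne.symm hba)).2.2.2 huab (llb a b (incU (Ne.symm hba) huab) ⟨d, Or.inr h, Or.inr hdb⟩)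
      have huad : u a d := by
        rcases (eo a d hnad).1 with h | h | h | h
        · exact absurd h hnlt
        · exact absurd h hnlt2
        · exact h
        · exact absurd (acyc a b d huab h) (lt_asymm hdb)
      exact ⟨Or.inr ⟨hnad, Or.inr (Or.inr (Or.inr ⟨huad, Or.inl ⟨huab, hdb⟩⟩))⟩,
        Or.inr ⟨hnad, Or.inr (Or.inr (Or.inr ⟨huad, Or.inr ⟨hudc, hac2⟩⟩))⟩⟩
    · -- B5 : l b d, l b c, c < d
      have had : a < d := hac2.trans hcd2
      exact ⟨Or.inr ⟨ne_of_lt had, Or.inl ⟨had, Or.inr ⟨huab, hlbd⟩⟩⟩,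
        Or.inr ⟨ne_of_lt had, Or.inl ⟨had, Or.inl ⟨hac2, hcd2⟩⟩⟩⟩
    · exact absurd hlbc (notl' hcb3)
    · exact absurd hlbc ((eo b c hbc).2.2.2 hubc)
    · exact absurd hlbc (notl hbc3)
  · -- A3 : c < a, c < b, b < a
    rcases HC with ⟨hbd2, ⟨hbc3, hcd2⟩ | ⟨hubc, hlcd⟩⟩ | ⟨hdb, ⟨hdc, hcb3⟩ | ⟨hudc, hlcb2⟩⟩ |
      ⟨hlbd, ⟨hlbc2, hcd2⟩ | ⟨hldc, hcb3⟩⟩ | ⟨hubd, ⟨hubc, hdc⟩ | ⟨hudc, hbc3⟩⟩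
    · exact absurd hbc3 (lt_asymm hcb)
    · exact absurd hubc (notu' hcb)
    · -- B3 : d < b, d < c, c < b
      have hda : d < a := hdc.trans hca
      exact ⟨Or.inr ⟨ne_of_gt hda, Or.inr (Or.inl ⟨hda, Or.inl ⟨hdb, hba2⟩⟩)⟩,
        Or.inr ⟨ne_of_gt hda, Or.inr (Or.inl ⟨hda, Or.inl ⟨hdc, hca⟩⟩)⟩⟩
    · exact absurd hlcb2 (notl hcb)
    · exact absurd hlbc2 (notl' hcb)
    · -- B6 : l b d, l d c, c < b
      have hnad : a ≠ d := by rintro rfl; exact notl hba2 hlbd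
      have hnlt : ¬ a < d := fun h => (incL hbd hlbd).2.1 (hba2.trans h)
      have hnlt2 : ¬ d < a := fun h =>
        (eo b d hbd).2.2.2 (uub b d (incL hbd hlbd) ⟨a, Or.inr hba2, Or.inr h⟩) hlbd
      have hlad : l a d := by
        rcases (eo a d hnad).1 with h | h | h | h
        · exact absurd h hnlt
        · exact absurd h hnlt2
        · exact absurd (acyc d a c (usymm a d h) hldc) (lt_asymm (hcb.trans hba2))
        · exact h
      exact ⟨Or.inr ⟨hnad, Or.inr (Or.inr (Or.inl ⟨hlad, Or.inr ⟨lsymm b d hlbd, hba2⟩⟩))⟩,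
        Or.inr ⟨hnad, Or.inr (Or.inr (Or.inl ⟨hlad, Or.inr ⟨hldc, hcb.trans hba2⟩⟩))⟩⟩
    · exact absurd hubc (notu' hcb)
    · exact absurd hbc3 (lt_asymm hcb)
  · -- A4 : c < a, u c b, l b a
    rcases HC with ⟨hbd2, ⟨hbc3, hcd2⟩ | ⟨hubc, hlcd⟩⟩ | ⟨hdb, ⟨hdc, hcb3⟩ | ⟨hudc, hlcb2⟩⟩ |
      ⟨hlbd, ⟨hlbc2, hcd2⟩ | ⟨hldc, hcb3⟩⟩ | ⟨hubd, ⟨hubc, hdc⟩ | ⟨hudc, hbc3⟩⟩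
    · exact absurd hucb (notu' hbc3)
    · -- B2 : b < d, u b c, l c d
      have hnad : a ≠ d := by rintro rfl; exact notl hbd2 hlba
      have hnlt : ¬ a < d := fun h => (incL hcd hlcd).2.1 (hca.trans h)
      have hnlt2 : ¬ d < a := fun h => (incL hba hlba).2.1 (hbd2.trans h)
      have hlad : l a d := by
        rcases (eo a d hnad).1 with h | h | h | h
        · exact absurd h hnlt
        · exact absurd h hnlt2
        · exact absurd (acyc a d b h (lsymm b a hlba)) (lt_asymm hbd2)
        · exact h
      exact ⟨Or.inr ⟨hnad, Or.inr (Or.inr (Or.inl ⟨hlad, Or.inl ⟨lsymm b a hlba, hbd2⟩⟩))⟩,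
        Or.inr ⟨hnad, Or.inr (Or.inr (Or.inl ⟨hlad, Or.inr ⟨lsymm c d hlcd, hca⟩⟩))⟩⟩
    · exact absurd hucb (notu hcb3)
    · exact ((eo c b (Ne.symm hbc)).2.2.2 hucb hlcb2).elim
    · exact ((eo c b (Ne.symm hbc)).2.2.2 hucb (lsymm b c hlbc2)).elim
    · exact absurd hucb (notu hcb3)
    · -- B7 : u b d, u b c, d < c
      have hda : d < a := hdc.trans hca
      exact ⟨Or.inr ⟨ne_of_gt hda, Or.inr (Or.inl ⟨hda, Or.inr ⟨usymm b d hubd, hlba⟩⟩)⟩,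
        Or.inr ⟨ne_of_gt hda, Or.inr (Or.inl ⟨hda, Or.inl ⟨hdc, hca⟩⟩)⟩⟩
    · exact absurd hucb (notu' hbc3)
  · -- A5 : l a c, l a b, b < c
    rcases HC with ⟨hbd2, ⟨hbc3, hcd2⟩ | ⟨hubc, hlcd⟩⟩ | ⟨hdb, ⟨hdc, hcb3⟩ | ⟨hudc, hlcb2⟩⟩ |
      ⟨hlbd, ⟨hlbc2, hcd2⟩ | ⟨hldc, hcb3⟩⟩ | ⟨hubd, ⟨hubc, hdc⟩ | ⟨hudc, hbc3⟩⟩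
    · -- B1 : b < d, b < c, c < d
      have hnad : a ≠ d := by rintro rfl; exact notl' hcd2 hlac
      have hnlt : ¬ a < d := fun h =>
        (eo a c hac).2.2.2 (uub a c (incL hac hlac) ⟨d, Or.inr h, Or.inr hcd2⟩) hlac
      have hnlt2 : ¬ d < a := fun h => (incL (Ne.symm hba) hlab).2.2 (hbd2.trans h)
      have hlad : l a d := by
        rcases (eo a d hnad).1 with h | h | h | h
        · exact absurd h hnlt
        · exact absurd h hnlt2
        · exact absurd (acyc a d b h hlab) (lt_asymm hbd2)
        · exact h
      exact ⟨Or.inr ⟨hnad, Or.inr (Or.inr (Or.inl ⟨hlad, Or.inl ⟨hlab, hbd2⟩⟩))⟩,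
        Or.inr ⟨hnad, Or.inr (Or.inr (Or.inl ⟨hlad, Or.inl ⟨hlac, hcd2⟩⟩))⟩⟩
    · exact absurd hubc (notu hbc2)
    · exact absurd hcb3 (lt_asymm hbc2)
    · exact absurd hlcb2 (notl' hbc2)
    · exact absurd hlbc2 (notl hbc2)
    · exact absurd hcb3 (lt_asymm hbc2)
    · exact absurd hubc (notu hbc2)
    · -- B8 : u b d, u d c, b < c
      have hda : d < a := acyc b d a hubd (lsymm a b hlab)
      exact ⟨Or.inr ⟨ne_of_gt hda, Or.inr (Or.inl ⟨hda, Or.inr ⟨usymm b d hubd, lsymm a b hlab⟩⟩)⟩,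
        Or.inr ⟨ne_of_gt hda, Or.inr (Or.inl ⟨hda, Or.inr ⟨hudc, lsymm a c hlac⟩⟩)⟩⟩
  · -- A6 : l a c, l c b, b < a
    rcases HC with ⟨hbd2, ⟨hbc3, hcd2⟩ | ⟨hubc, hlcd⟩⟩ | ⟨hdb, ⟨hdc, hcb3⟩ | ⟨hudc, hlcb2⟩⟩ |
      ⟨hlbd, ⟨hlbc2, hcd2⟩ | ⟨hldc, hcb3⟩⟩ | ⟨hubd, ⟨hubc, hdc⟩ | ⟨hudc, hbc3⟩⟩
    · exact absurd hlcb (notl' hbc3)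
    · exact ((eo b c hbc).2.2.2 hubc (lsymm c b hlcb)).elim
    · exact absurd hlcb (notl hcb3)
    · -- B4 : d < b, u d c, l c b
      have hda : d < a := hdb.trans hba2
      exact ⟨Or.inr ⟨ne_of_gt hda, Or.inr (Or.inl ⟨hda, Or.inl ⟨hdb, hba2⟩⟩)⟩,
        Or.inr ⟨ne_of_gt hda, Or.inr (Or.inl ⟨hda, Or.inr ⟨hudc, lsymm a c hlac⟩⟩)⟩⟩
    · -- B5 : l b d, l b c, c < d
      have hnad : a ≠ d := by rintro rfl; exact notl' hcd2 hlac
      have hnlt : ¬ a < d := fun h => (incL hbd hlbd).2.1 (hba2.trans h)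
      have hnlt2 : ¬ d < a := fun h =>
        (eo b d hbd).2.2.2 (uub b d (incL hbd hlbd) ⟨a, Or.inr hba2, Or.inr h⟩) hlbd
      have hlad : l a d := by
        rcases (eo a d hnad).1 with h | h | h | h
        · exact absurd h hnlt
        · exact absurd h hnlt2
        · exact absurd (acyc a d c h hlac) (lt_asymm hcd2)
        · exact h
      exact ⟨Or.inr ⟨hnad, Or.inr (Or.inr (Or.inl ⟨hlad, Or.inr ⟨lsymm b d hlbd, hba2⟩⟩))⟩,
        Or.inr ⟨hnad, Or.inr (Or.inr (Or.inl ⟨hlad, Or.inl ⟨hlac, hcd2⟩⟩))⟩⟩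
    · exact absurd hlcb (notl hcb3)
    · exact ((eo b c hbc).2.2.2 hubc (lsymm c b hlcb)).elim
    · exact absurd hlcb (notl' hbc3)
  · -- A7 : u a c, u a b, c < b
    rcases HC with ⟨hbd2, ⟨hbc3, hcd2⟩ | ⟨hubc, hlcd⟩⟩ | ⟨hdb, ⟨hdc, hcb3⟩ | ⟨hudc, hlcb2⟩⟩ |
      ⟨hlbd, ⟨hlbc2, hcd2⟩ | ⟨hldc, hcb3⟩⟩ | ⟨hubd, ⟨hubc, hdc⟩ | ⟨hudc, hbc3⟩⟩
    · exact absurd hbc3 (lt_asymm hcb)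
    · exact absurd hubc (notu' hcb)
    · -- B3 : d < b, d < c, c < b
      have hnad : a ≠ d := by rintro rfl; exact notu hdc huac
      have hnlt : ¬ a < d := fun h => (incU hac huac).2.1 (h.trans hdc)
      have hnlt2 : ¬ d < a := fun h =>
        (eo a c hac).2.2.2 huac (llb a c (incU hac huac) ⟨d, Or.inr h, Or.inr hdc⟩)
      have huad : u a d := by
        rcases (eo a d hnad).1 with h | h | h | h
        · exact absurd h hnlt
        · exact absurd h hnlt2
        · exact h
        · exact absurd (acyc a c d huac h) (lt_asymm hdc)
      exact ⟨Or.inr ⟨hnad, Or.inr (Or.inr (Or.inr ⟨huad, Or.inl ⟨huab, hdc.trans hcb⟩⟩))⟩,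
        Or.inr ⟨hnad, Or.inr (Or.inr (Or.inr ⟨huad, Or.inl ⟨huac, hdc⟩⟩))⟩⟩
    · exact absurd hlcb2 (notl hcb)
    · exact absurd hlbc2 (notl' hcb)
    · -- B6 : l b d, l d c, c < b
      have had : a < d := acyc b a d (usymm a b huab) hlbd
      exact ⟨Or.inr ⟨ne_of_lt had, Or.inl ⟨had, Or.inr ⟨huab, hlbd⟩⟩⟩,
        Or.inr ⟨ne_of_lt had, Or.inl ⟨had, Or.inr ⟨huac, lsymm d c hldc⟩⟩⟩⟩
    · exact absurd hubc (notu' hcb)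
    · exact absurd hbc3 (lt_asymm hcb)
  · -- A8 : u a c, u c b, a < b
    rcases HC with ⟨hbd2, ⟨hbc3, hcd2⟩ | ⟨hubc, hlcd⟩⟩ | ⟨hdb, ⟨hdc, hcb3⟩ | ⟨hudc, hlcb2⟩⟩ |
      ⟨hlbd, ⟨hlbc2, hcd2⟩ | ⟨hldc, hcb3⟩⟩ | ⟨hubd, ⟨hubc, hdc⟩ | ⟨hudc, hbc3⟩⟩
    · exact absurd hucb (notu' hbc3)
    · -- B2 : b < d, u b c, l c d
      have had : a < d := hab.trans hbd2
      exact ⟨Or.inr ⟨ne_of_lt had, Or.inl ⟨had, Or.inl ⟨hab, hbd2⟩⟩⟩,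
        Or.inr ⟨ne_of_lt had, Or.inl ⟨had, Or.inr ⟨huac, hlcd⟩⟩⟩⟩
    · exact absurd hucb (notu hcb3)
    · exact ((eo c b (Ne.symm hbc)).2.2.2 hucb hlcb2).elim
    · exact ((eo c b (Ne.symm hbc)).2.2.2 hucb (lsymm b c hlbc2)).elim
    · exact absurd hucb (notu hcb3)
    · -- B7 : u b d, u b c, d < c
      have hnad : a ≠ d := by rintro rfl; exact notu' hab hubd
      have hnlt : ¬ a < d := fun h =>
        (eo b d hbd).2.2.2 hubd (llb b d (incU hbd hubd) ⟨a, Or.inr hab, Or.inr h⟩)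
      have hnlt2 : ¬ d < a := fun h => (incU hbd hubd).2.2 (h.trans hab)
      have huad : u a d := by
        rcases (eo a d hnad).1 with h | h | h | h
        · exact absurd h hnlt
        · exact absurd h hnlt2
        · exact h
        · exact absurd (acyc d b a (usymm b d hubd) (lsymm a d h)) (lt_asymm hab)
      exact ⟨Or.inr ⟨hnad, Or.inr (Or.inr (Or.inr ⟨huad, Or.inr ⟨usymm b d hubd, hab⟩⟩))⟩,
        Or.inr ⟨hnad, Or.inr (Or.inr (Or.inr ⟨huad, Or.inl ⟨huac, hdc⟩⟩))⟩⟩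
    · exact absurd hucb (notu' hbc3)

end PaperSC
end

section
/- Let S be a partially ordered set with a simply connected extension (∼_u, ∼_l), and let a ≠ b in S. Define, for x, y ∈ B_{a,b}, x ⪯ y iff x ∈ B_{a,y}. Then ⪯ is a total (linear) order on the set B_{a,b}, with least element a and greatest element b. -/
open Pointwise

namespace PaperSC

variable {S : Type*}

section Helpers

variable {lt u l : S → S → Prop} {a b c x y z : S}

lemma ltexcl (hs : IsSCExt lt u l) (hne : x ≠ y) (h : lt x y) :
    ¬ lt y x ∧ ¬ u x y ∧ ¬ u y x ∧ ¬ l x y ∧ ¬ l y x := by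
  obtain ⟨-, h2, -, -⟩ := hs.exactly_one x y hne
  obtain ⟨a1, a2, a3⟩ := h2 h
  exact ⟨a1, a2, fun hu => a2 (hs.u_symm _ _ hu), a3, fun hl => a3 (hs.l_symm _ _ hl)⟩

lemma uexcl (hs : IsSCExt lt u l) (hne : x ≠ y) (h : u x y) :
    ¬ lt x y ∧ ¬ lt y x ∧ ¬ l x y ∧ ¬ l y x := by
  obtain ⟨-, h2, h3, h4⟩ := hs.exactly_one x y hne
  exact ⟨fun h' => (h2 h').2.1 h, fun h' => (h3 h').1 h, h4 h,
    fun hl => (h4 h) (hs.l_symm _ _ hl)⟩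

lemma lexcl (hs : IsSCExt lt u l) (hne : x ≠ y) (h : l x y) :
    ¬ lt x y ∧ ¬ lt y x ∧ ¬ u x y ∧ ¬ u y x := by
  obtain ⟨-, h2, h3, h4⟩ := hs.exactly_one x y hne
  exact ⟨fun h' => (h2 h').2.2 h, fun h' => (h3 h').2 h, fun hu => h4 hu h,
    fun hu => h4 (hs.u_symm _ _ hu) h⟩

lemma ex4 (hs : IsSCExt lt u l) (hne : x ≠ y) : lt x y ∨ lt y x ∨ u x y ∨ l x y :=
  (hs.exactly_one x y hne).1

lemma a_mem (a c : S) : a ∈ BSet lt u l a c := Or.inl (Or.inl rfl)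

lemma c_mem (a c : S) : c ∈ BSet lt u l a c := Or.inl (Or.inr rfl)

lemma mem_self (h : x ∈ BSet lt u l a a) : x = a := by
  simp only [BSet, Set.mem_union, Set.mem_insert_iff, Set.mem_singleton_iff,
    Set.mem_setOf_eq] at h
  tauto

lemma mem_char_lt (hi : ∀ x : S, ¬ lt x x) (hs : IsSCExt lt u l) (hac : lt a c) :
    x ∈ BSet lt u l a c ↔ x = a ∨ x = c ∨ (lt a x ∧ lt x c) ∨ (u a x ∧ l x c) := by
  have hne : a ≠ c := fun e => hi a (e ▸ hac)
  obtain ⟨h1, h2, h3, h4, h5⟩ := ltexcl hs hne hac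
  have hb : Btwn lt u l a c x ↔ (lt a x ∧ lt x c) ∨ (u a x ∧ l x c) := by
    constructor
    · rintro (⟨-, d⟩ | ⟨g, -⟩ | ⟨g, -⟩ | ⟨g, -⟩)
      · exact d
      · exact absurd g h1
      · exact absurd g h4
      · exact absurd g h2
    · exact fun d => Or.inl ⟨hac, d⟩
  simp only [BSet, Set.mem_union, Set.mem_insert_iff, Set.mem_singleton_iff,
    Set.mem_setOf_eq, hb, hne, true_and, ne_eq, not_false_eq_true, or_assoc]

lemma mem_char_gt (hi : ∀ x : S, ¬ lt x x) (hs : IsSCExt lt u l) (hca : lt c a) :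
    x ∈ BSet lt u l a c ↔ x = a ∨ x = c ∨ (lt c x ∧ lt x a) ∨ (u c x ∧ l x a) := by
  have hne : a ≠ c := fun e => hi a (e ▸ hca)
  obtain ⟨h1, h2, h3, h4, h5⟩ := ltexcl hs hne.symm hca
  have hb : Btwn lt u l a c x ↔ (lt c x ∧ lt x a) ∨ (u c x ∧ l x a) := by
    constructor
    · rintro (⟨g, -⟩ | ⟨-, d⟩ | ⟨g, -⟩ | ⟨g, -⟩)
      · exact absurd g h1
      · exact d
      · exact absurd g h5
      · exact absurd g h3
    · exact fun d => Or.inr (Or.inl ⟨hca, d⟩)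
  simp only [BSet, Set.mem_union, Set.mem_insert_iff, Set.mem_singleton_iff,
    Set.mem_setOf_eq, hb, hne, true_and, ne_eq, not_false_eq_true, or_assoc]

lemma mem_char_u (hs : IsSCExt lt u l) (hne : a ≠ c) (hac : u a c) :
    x ∈ BSet lt u l a c ↔ x = a ∨ x = c ∨ (u a x ∧ lt c x) ∨ (u c x ∧ lt a x) := by
  obtain ⟨h1, h2, h3, h4⟩ := uexcl hs hne hac
  have hb : Btwn lt u l a c x ↔ (u a x ∧ lt c x) ∨ (u c x ∧ lt a x) := by
    constructor
    · rintro (⟨g, -⟩ | ⟨g, -⟩ | ⟨g, -⟩ | ⟨-, d⟩)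
      · exact absurd g h1
      · exact absurd g h2
      · exact absurd g h3
      · exact d
    · exact fun d => Or.inr (Or.inr (Or.inr ⟨hac, d⟩))
  simp only [BSet, Set.mem_union, Set.mem_insert_iff, Set.mem_singleton_iff,
    Set.mem_setOf_eq, hb, hne, true_and, ne_eq, not_false_eq_true, or_assoc]

lemma mem_char_l (hs : IsSCExt lt u l) (hne : a ≠ c) (hac : l a c) :
    x ∈ BSet lt u l a c ↔ x = a ∨ x = c ∨ (l a x ∧ lt x c) ∨ (l c x ∧ lt x a) := by
  obtain ⟨h1, h2, h3, h4⟩ := lexcl hs hne hac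
  have hb : Btwn lt u l a c x ↔ (l a x ∧ lt x c) ∨ (l c x ∧ lt x a) := by
    constructor
    · rintro (⟨g, -⟩ | ⟨g, -⟩ | ⟨-, d⟩ | ⟨g, -⟩)
      · exact absurd g h1
      · exact absurd g h2
      · exact d
      · exact absurd g h3
    · exact fun d => Or.inr (Or.inr (Or.inl ⟨hac, d⟩))
  simp only [BSet, Set.mem_union, Set.mem_insert_iff, Set.mem_singleton_iff,
    Set.mem_setOf_eq, hb, hne, true_and, ne_eq, not_false_eq_true, or_assoc]

end Helpers
section Classify

variable {lt u l : S → S → Prop} {a b x : S}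

lemma classify_lt (hi : ∀ x : S, ¬ lt x x) (hs : IsSCExt lt u l) (hab : lt a b)
    (hx : x ∈ BSet lt u l a b) :
    x = a ∨ (lt a x ∧ Le' lt x b) ∨ (u a x ∧ l x b) := by
  rw [mem_char_lt hi hs hab] at hx
  rcases hx with rfl | rfl | ⟨h1, h2⟩ | h
  · exact Or.inl rfl
  · exact Or.inr (Or.inl ⟨hab, Or.inl rfl⟩)
  · exact Or.inr (Or.inl ⟨h1, Or.inr h2⟩)
  · exact Or.inr (Or.inr h)

lemma classify_l (hs : IsSCExt lt u l) (hne : a ≠ b) (hab : l a b)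
    (hx : x ∈ BSet lt u l a b) :
    x = a ∨ (l a x ∧ Le' lt x b) ∨ (lt x a ∧ l b x) := by
  rw [mem_char_l hs hne hab] at hx
  rcases hx with rfl | rfl | ⟨h1, h2⟩ | ⟨h1, h2⟩
  · exact Or.inl rfl
  · exact Or.inr (Or.inl ⟨hab, Or.inl rfl⟩)
  · exact Or.inr (Or.inl ⟨h1, Or.inr h2⟩)
  · exact Or.inr (Or.inr ⟨h2, h1⟩)

/-- Facts about a `U`-class element in case `a < b`. -/
lemma getU (hi : ∀ x : S, ¬ lt x x) (hs : IsSCExt lt u l) (hab : lt a b)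
    (hx : x ∈ BSet lt u l a b) (hxa : x ≠ a) (hax : u a x) : l x b ∧ x ≠ b := by
  have hneab : a ≠ b := fun e => hi a (e ▸ hab)
  rcases classify_lt hi hs hab hx with rfl | ⟨h1, -⟩ | ⟨-, h2⟩
  · exact absurd rfl hxa
  · exact absurd h1 (uexcl hs (Ne.symm hxa) hax).1
  · exact ⟨h2, fun e => (ltexcl hs hneab hab).2.1 (e ▸ hax)⟩

/-- Facts about a `P`-class element in case `a < b`. -/
lemma getP (hi : ∀ x : S, ¬ lt x x) (hs : IsSCExt lt u l) (hab : lt a b)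
    (hx : x ∈ BSet lt u l a b) (hax : lt a x) : Le' lt x b := by
  rcases classify_lt hi hs hab hx with he | ⟨-, h2⟩ | ⟨h1, -⟩
  · exact absurd (he ▸ hax) (hi a)
  · exact h2
  · exact absurd hax (uexcl hs (fun e => hi x (by rw [e] at hax; exact hax)) h1).1

/-- Facts about an `L`-class element in case `a ∼ₗ b`. -/
lemma getL (hs : IsSCExt lt u l) (hneab : a ≠ b) (hab : l a b)
    (hx : x ∈ BSet lt u l a b) (hxa : x ≠ a) (hax : l a x) : Le' lt x b := by
  rcases classify_l hs hneab hab hx with rfl | ⟨-, h2⟩ | ⟨h1, -⟩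
  · exact absurd rfl hxa
  · exact h2
  · exact absurd h1 (lexcl hs (Ne.symm hxa) hax).2.1

/-- Facts about an `N`-class element in case `a ∼ₗ b`. -/
lemma getN (hi : ∀ x : S, ¬ lt x x) (hs : IsSCExt lt u l) (hneab : a ≠ b) (hab : l a b)
    (hx : x ∈ BSet lt u l a b) (hax : lt x a) : l b x ∧ x ≠ b := by
  rcases classify_l hs hneab hab hx with he | ⟨h1, -⟩ | ⟨-, h2⟩
  · exact absurd (he ▸ hax) (hi a)
  · exact absurd hax (lexcl hs (fun e => hi x (by rw [e] at hax; exact hax)) h1).2.1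
  · exact ⟨h2, fun e => (lexcl hs hneab hab).2.1 (e ▸ hax)⟩

end Classify
section Trans

variable {lt u l : S → S → Prop} {a b x y z : S}

lemma trans_lt (ht : ∀ {x y z : S}, lt x y → lt y z → lt x z) (hi : ∀ x : S, ¬ lt x x)
    (hs : IsSCExt lt u l) (hab : lt a b)
    (hx : x ∈ BSet lt u l a b) (hy : y ∈ BSet lt u l a b) (hz : z ∈ BSet lt u l a b)
    (hxy : x ∈ BSet lt u l a y) (hyz : y ∈ BSet lt u l a z) :
    x ∈ BSet lt u l a z := by
  classical
  by_cases hza : z = a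
  · subst hza
    have h1 := mem_self hyz; subst h1
    have h2 := mem_self hxy; subst h2
    exact a_mem _ _
  by_cases hya : y = a
  · subst hya
    have h2 := mem_self hxy; subst h2
    exact a_mem _ _
  by_cases hxa : x = a
  · subst hxa; exact a_mem _ _
  by_cases hxz : x = z
  · subst hxz; exact c_mem _ _
  by_cases hxy' : x = y
  · subst hxy'; exact hyz
  by_cases hyz' : y = z
  · subst hyz'; exact hxy
  have hneab : a ≠ b := fun e => hi a (e ▸ hab)
  rcases classify_lt hi hs hab hz with he | ⟨haz, hzb⟩ | ⟨haz, hzb⟩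
  · exact absurd he hza
  -- Case: z is in class P (a < z ≤ b)
  · rw [mem_char_lt hi hs haz] at hyz ⊢
    rcases hyz with he | he | ⟨hay, hyz2⟩ | ⟨hay, hyz2⟩
    · exact absurd he hya
    · exact absurd he hyz'
    -- y ∈ P : a < y < z
    · rw [mem_char_lt hi hs hay] at hxy
      rcases hxy with he | he | ⟨hax, hxy2⟩ | ⟨hax, hxy2⟩
      · exact absurd he hxa
      · exact absurd he hxy'
      · exact Or.inr (Or.inr (Or.inl ⟨hax, ht hxy2 hyz2⟩))
      -- x ∈ U, l x y : need l x z
      · obtain ⟨hxb, hxbne⟩ := getU hi hs hab hx hxa hax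
        have h1 : ¬ lt x z := fun h => (lexcl hs hxbne hxb).1
          (by rcases (hzb : z = b ∨ lt z b) with rfl | h2
              · exact h
              · exact ht h h2)
        have h2 : ¬ lt z x := fun h => (uexcl hs (Ne.symm hxa) hax).1 (ht haz h)
        have h3 : ¬ u x z := fun h => hi y (ht hyz2 (hs.acyclic x z y h hxy2))
        have h4 : l x z := by
          rcases ex4 hs hxz with h | h | h | h
          · exact absurd h h1
          · exact absurd h h2
          · exact absurd h h3
          · exact h
        exact Or.inr (Or.inr (Or.inr ⟨hax, h4⟩))
    -- y ∈ U : u a y, l y z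
    · rw [mem_char_u hs (Ne.symm hya) hay] at hxy
      rcases hxy with he | he | ⟨hax, hxy2⟩ | ⟨hax, hxy2⟩
      · exact absurd he hxa
      · exact absurd he hxy'
      -- x ∈ U (u a x, lt y x) : need l x z
      · obtain ⟨hxb, hxbne⟩ := getU hi hs hab hx hxa hax
        have h1 : ¬ lt x z := fun h => (lexcl hs hxbne hxb).1
          (by rcases (hzb : z = b ∨ lt z b) with rfl | h2
              · exact h
              · exact ht h h2)
        have h2 : ¬ lt z x := fun h => (uexcl hs (Ne.symm hxa) hax).1 (ht haz h)
        have h3 : ¬ u x z := fun h =>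
          hi y (ht hxy2 (hs.acyclic z x y (hs.u_symm _ _ h) (hs.l_symm _ _ hyz2)))
        have h4 : l x z := by
          rcases ex4 hs hxz with h | h | h | h
          · exact absurd h h1
          · exact absurd h h2
          · exact absurd h h3
          · exact h
        exact Or.inr (Or.inr (Or.inr ⟨hax, h4⟩))
      -- x ∈ P (u y x, lt a x) : lt x z by acyclicity
      · exact Or.inr (Or.inr (Or.inl ⟨hxy2, hs.acyclic y x z hax hyz2⟩))
  -- Case: z is in class U (u a z, l z b)
  · have hzbne : z ≠ b := fun e => (ltexcl hs hneab hab).2.1 (e ▸ haz)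
    rw [mem_char_u hs (Ne.symm hza) haz] at hyz ⊢
    rcases hyz with he | he | ⟨hay, hyz2⟩ | ⟨hay, hyz2⟩
    · exact absurd he hya
    · exact absurd he hyz'
    -- y ∈ U : u a y, lt z y
    · rw [mem_char_u hs (Ne.symm hya) hay] at hxy
      rcases hxy with he | he | ⟨hax, hxy2⟩ | ⟨hax, hxy2⟩
      · exact absurd he hxa
      · exact absurd he hxy'
      · exact Or.inr (Or.inr (Or.inl ⟨hax, ht hyz2 hxy2⟩))
      -- x ∈ P (u y x, lt a x) : need u z x
      · have hxb : Le' lt x b := getP hi hs hab hx hxy2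
        have h1 : ¬ lt x z := fun h => (uexcl hs (Ne.symm hza) haz).1 (ht hxy2 h)
        have h2 : ¬ lt z x := fun h => (lexcl hs hzbne hzb).1
          (by rcases (hxb : x = b ∨ lt x b) with rfl | h2
              · exact h
              · exact ht h h2)
        have h3 : ¬ l x z := fun h =>
          hi z (ht hyz2 (hs.acyclic x y z (hs.u_symm _ _ hax) h))
        have h4 : u x z := by
          rcases ex4 hs hxz with h | h | h | h
          · exact absurd h h1
          · exact absurd h h2
          · exact h
          · exact absurd h h3
        exact Or.inr (Or.inr (Or.inr ⟨hs.u_symm _ _ h4, hxy2⟩))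
    -- y ∈ P : u z y, lt a y
    · rw [mem_char_lt hi hs hyz2] at hxy
      rcases hxy with he | he | ⟨hax, hxy2'⟩ | ⟨hax, hxy2'⟩
      · exact absurd he hxa
      · exact absurd he hxy'
      -- x ∈ P (lt a x, lt x y) : need u z x
      · have hxb : Le' lt x b := getP hi hs hab hx hax
        have h1 : ¬ lt x z := fun h => (uexcl hs (Ne.symm hza) haz).1 (ht hax h)
        have h2 : ¬ lt z x := fun h => (lexcl hs hzbne hzb).1
          (by rcases (hxb : x = b ∨ lt x b) with rfl | h2
              · exact h
              · exact ht h h2)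
        have h3 : ¬ l x z := fun h =>
          hi x (ht hxy2' (hs.acyclic z y x hay (hs.l_symm _ _ h)))
        have h4 : u x z := by
          rcases ex4 hs hxz with h | h | h | h
          · exact absurd h h1
          · exact absurd h h2
          · exact h
          · exact absurd h h3
        exact Or.inr (Or.inr (Or.inr ⟨hs.u_symm _ _ h4, hax⟩))
      -- x ∈ U (u a x, l x y) : lt z x by acyclicity
      · exact Or.inr (Or.inr (Or.inl
          ⟨hax, hs.acyclic y z x (hs.u_symm _ _ hay) (hs.l_symm _ _ hxy2')⟩))

end Trans
section TransL

variable {lt u l : S → S → Prop} {a b x y z : S}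

lemma trans_l (ht : ∀ {x y z : S}, lt x y → lt y z → lt x z) (hi : ∀ x : S, ¬ lt x x)
    (hs : IsSCExt lt u l) (hneab : a ≠ b) (hab : l a b)
    (hx : x ∈ BSet lt u l a b) (hy : y ∈ BSet lt u l a b) (hz : z ∈ BSet lt u l a b)
    (hxy : x ∈ BSet lt u l a y) (hyz : y ∈ BSet lt u l a z) :
    x ∈ BSet lt u l a z := by
  classical
  by_cases hza : z = a
  · subst hza
    have h1 := mem_self hyz; subst h1
    have h2 := mem_self hxy; subst h2
    exact a_mem _ _
  by_cases hya : y = a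
  · subst hya
    have h2 := mem_self hxy; subst h2
    exact a_mem _ _
  by_cases hxa : x = a
  · subst hxa; exact a_mem _ _
  by_cases hxz : x = z
  · subst hxz; exact c_mem _ _
  by_cases hxy' : x = y
  · subst hxy'; exact hyz
  by_cases hyz' : y = z
  · subst hyz'; exact hxy
  rcases classify_l hs hneab hab hz with he | ⟨haz, hzb⟩ | ⟨haz, hzb⟩
  · exact absurd he hza
  -- Case: z ∈ L (l a z, z ≤ b)
  · rw [mem_char_l hs (Ne.symm hza) haz] at hyz ⊢
    rcases hyz with he | he | ⟨hay, hyz2⟩ | ⟨hay, hyz2⟩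
    · exact absurd he hya
    · exact absurd he hyz'
    -- y ∈ L : l a y, lt y z
    · rw [mem_char_l hs (Ne.symm hya) hay] at hxy
      rcases hxy with he | he | ⟨hax, hxy2⟩ | ⟨hax, hxy2⟩
      · exact absurd he hxa
      · exact absurd he hxy'
      · exact Or.inr (Or.inr (Or.inl ⟨hax, ht hxy2 hyz2⟩))
      -- x ∈ N (l y x, lt x a) : need l z x
      · obtain ⟨hbx, hxbne⟩ := getN hi hs hneab hab hx hxy2
        have h1 : ¬ lt x z := fun h => (lexcl hs (Ne.symm hxbne) hbx).2.1
          (by rcases (hzb : z = b ∨ lt z b) with rfl | h2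
              · exact h
              · exact ht h h2)
        have h2 : ¬ lt z x := fun h => (lexcl hs (Ne.symm hza) haz).2.1 (ht h hxy2)
        have h3 : ¬ u x z := fun h => hi y (ht hyz2 (hs.acyclic x z y h (hs.l_symm _ _ hax)))
        have h4 : l x z := by
          rcases ex4 hs hxz with h | h | h | h
          · exact absurd h h1
          · exact absurd h h2
          · exact absurd h h3
          · exact h
        exact Or.inr (Or.inr (Or.inr ⟨hs.l_symm _ _ h4, hxy2⟩))
    -- y ∈ N : l z y, lt y a
    · rw [mem_char_gt hi hs hyz2] at hxy
      rcases hxy with he | he | ⟨hax, hxy2'⟩ | ⟨hax, hxy2'⟩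
      · exact absurd he hxa
      · exact absurd he hxy'
      -- x ∈ N (lt y x, lt x a) : need l z x
      · obtain ⟨hbx, hxbne⟩ := getN hi hs hneab hab hx hxy2'
        have h1 : ¬ lt x z := fun h => (lexcl hs (Ne.symm hxbne) hbx).2.1
          (by rcases (hzb : z = b ∨ lt z b) with rfl | h2
              · exact h
              · exact ht h h2)
        have h2 : ¬ lt z x := fun h => (lexcl hs (Ne.symm hza) haz).2.1 (ht h hxy2')
        have h3 : ¬ u x z := fun h =>
          hi y (ht hax (hs.acyclic z x y (hs.u_symm _ _ h) hay))
        have h4 : l x z := by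
          rcases ex4 hs hxz with h | h | h | h
          · exact absurd h h1
          · exact absurd h h2
          · exact absurd h h3
          · exact h
        exact Or.inr (Or.inr (Or.inr ⟨hs.l_symm _ _ h4, hxy2'⟩))
      -- x ∈ L (u y x, l x a) : lt x z by acyclicity
      · exact Or.inr (Or.inr (Or.inl
          ⟨hs.l_symm _ _ hxy2', hs.acyclic y x z hax (hs.l_symm _ _ hay)⟩))
  -- Case: z ∈ N (lt z a, l b z)
  · have hzbne : b ≠ z := fun e => (lexcl hs hneab hab).2.1 (e ▸ haz)
    rw [mem_char_gt hi hs haz] at hyz ⊢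
    rcases hyz with he | he | ⟨hay, hyz2⟩ | ⟨hay, hyz2⟩
    · exact absurd he hya
    · exact absurd he hyz'
    -- y ∈ N : lt z y, lt y a
    · rw [mem_char_gt hi hs hyz2] at hxy
      rcases hxy with he | he | ⟨hax, hxy2'⟩ | ⟨hax, hxy2'⟩
      · exact absurd he hxa
      · exact absurd he hxy'
      · exact Or.inr (Or.inr (Or.inl ⟨ht hay hax, hxy2'⟩))
      -- x ∈ L (u y x, l x a) : need u z x
      · have hxb : Le' lt x b := getL hs hneab hab hx hxa (hs.l_symm _ _ hxy2')
        have h1 : ¬ lt x z := fun h => (lexcl hs (Ne.symm hxa) (hs.l_symm _ _ hxy2')).2.1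
          (ht h haz)
        have h2 : ¬ lt z x := fun h => (lexcl hs hzbne hzb).2.1
          (by rcases (hxb : x = b ∨ lt x b) with rfl | h2
              · exact h
              · exact ht h h2)
        have h3 : ¬ l x z := fun h =>
          hi y (ht (hs.acyclic x y z (hs.u_symm _ _ hax) h) hay)
        have h4 : u x z := by
          rcases ex4 hs hxz with h | h | h | h
          · exact absurd h h1
          · exact absurd h h2
          · exact h
          · exact absurd h h3
        exact Or.inr (Or.inr (Or.inr ⟨hs.u_symm _ _ h4, hxy2'⟩))
    -- y ∈ L : u z y, l y a
    · have hay' : l a y := hs.l_symm _ _ hyz2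
      rw [mem_char_l hs (Ne.symm hya) hay'] at hxy
      rcases hxy with he | he | ⟨hax, hxy2'⟩ | ⟨hax, hxy2'⟩
      · exact absurd he hxa
      · exact absurd he hxy'
      -- x ∈ L (l a x, lt x y) : need u z x
      · have hxb : Le' lt x b := getL hs hneab hab hx hxa hax
        have h1 : ¬ lt x z := fun h => (lexcl hs (Ne.symm hxa) hax).2.1 (ht h haz)
        have h2 : ¬ lt z x := fun h => (lexcl hs hzbne hzb).2.1
          (by rcases (hxb : x = b ∨ lt x b) with rfl | h2
              · exact h
              · exact ht h h2)
        have h3 : ¬ l x z := fun h =>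
          hi x (ht hxy2' (hs.acyclic z y x hay (hs.l_symm _ _ h)))
        have h4 : u x z := by
          rcases ex4 hs hxz with h | h | h | h
          · exact absurd h h1
          · exact absurd h h2
          · exact h
          · exact absurd h h3
        exact Or.inr (Or.inr (Or.inr ⟨hs.u_symm _ _ h4, hs.l_symm _ _ hax⟩))
      -- x ∈ N (l y x, lt x a) : lt z x by acyclicity
      · exact Or.inr (Or.inr (Or.inl
          ⟨hs.acyclic y z x (hs.u_symm _ _ hay) hax, hxy2'⟩))

end TransL
section AntisymTotal

variable {lt u l : S → S → Prop} {a b x y : S}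

lemma antisym_lt (ht : ∀ {x y z : S}, lt x y → lt y z → lt x z) (hi : ∀ x : S, ¬ lt x x)
    (hs : IsSCExt lt u l) (hab : lt a b)
    (hx : x ∈ BSet lt u l a b) (hy : y ∈ BSet lt u l a b)
    (hxy : x ∈ BSet lt u l a y) (hyx : y ∈ BSet lt u l a x) : x = y := by
  classical
  by_cases hxy' : x = y
  · exact hxy'
  by_cases hxa : x = a
  · subst hxa; exact (mem_self hyx).symm
  by_cases hya : y = a
  · subst hya; exact mem_self hxy
  exfalso
  rcases classify_lt hi hs hab hy with he | ⟨hay, -⟩ | ⟨hay, -⟩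
  · exact absurd he hya
  -- y ∈ P
  · rw [mem_char_lt hi hs hay] at hxy
    rcases hxy with he | he | ⟨hax, h1⟩ | ⟨hax, h1⟩
    · exact absurd he hxa
    · exact absurd he hxy'
    · rw [mem_char_lt hi hs hax] at hyx
      rcases hyx with he | he | ⟨-, h2⟩ | ⟨-, h2⟩
      · exact absurd he hya
      · exact absurd he.symm hxy'
      · exact hi x (ht h1 h2)
      · exact (lexcl hs (Ne.symm hxy') h2).2.1 h1
    · rw [mem_char_u hs (Ne.symm hxa) hax] at hyx
      rcases hyx with he | he | ⟨-, h2⟩ | ⟨h2, -⟩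
      · exact absurd he hya
      · exact absurd he.symm hxy'
      · exact (lexcl hs hxy' h1).1 h2
      · exact (lexcl hs hxy' h1).2.2.1 h2
  -- y ∈ U
  · rw [mem_char_u hs (Ne.symm hya) hay] at hxy
    rcases hxy with he | he | ⟨hax, h1⟩ | ⟨hax, h1⟩
    · exact absurd he hxa
    · exact absurd he hxy'
    · rw [mem_char_u hs (Ne.symm hxa) hax] at hyx
      rcases hyx with he | he | ⟨-, h2⟩ | ⟨-, h3⟩
      · exact absurd he hya
      · exact absurd he.symm hxy'
      · exact hi x (ht h2 h1)
      · exact (uexcl hs (Ne.symm hya) hay).1 h3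
    · rw [mem_char_lt hi hs h1] at hyx
      rcases hyx with he | he | ⟨h2, -⟩ | ⟨-, h3⟩
      · exact absurd he hya
      · exact absurd he.symm hxy'
      · exact (uexcl hs (Ne.symm hya) hay).1 h2
      · exact (uexcl hs (Ne.symm hxy') hax).2.2.1 h3
  

lemma antisym_l (ht : ∀ {x y z : S}, lt x y → lt y z → lt x z) (hi : ∀ x : S, ¬ lt x x)
    (hs : IsSCExt lt u l) (hneab : a ≠ b) (hab : l a b)
    (hx : x ∈ BSet lt u l a b) (hy : y ∈ BSet lt u l a b)
    (hxy : x ∈ BSet lt u l a y) (hyx : y ∈ BSet lt u l a x) : x = y := by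
  classical
  by_cases hxy' : x = y
  · exact hxy'
  by_cases hxa : x = a
  · subst hxa; exact (mem_self hyx).symm
  by_cases hya : y = a
  · subst hya; exact mem_self hxy
  exfalso
  rcases classify_l hs hneab hab hy with he | ⟨hay, -⟩ | ⟨hay, -⟩
  · exact absurd he hya
  -- y ∈ L
  · rw [mem_char_l hs (Ne.symm hya) hay] at hxy
    rcases hxy with he | he | ⟨hax, h1⟩ | ⟨hax, h1⟩
    · exact absurd he hxa
    · exact absurd he hxy'
    -- x ∈ L : l a x, lt x y
    · rw [mem_char_l hs (Ne.symm hxa) hax] at hyx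
      rcases hyx with he | he | ⟨-, h2⟩ | ⟨h2, -⟩
      · exact absurd he hya
      · exact absurd he.symm hxy'
      · exact hi x (ht h1 h2)
      · exact (lexcl hs hxy' h2).1 h1
    -- x ∈ N : l y x, lt x a
    · rw [mem_char_gt hi hs h1] at hyx
      rcases hyx with he | he | ⟨h2, -⟩ | ⟨h2, -⟩
      · exact absurd he hya
      · exact absurd he.symm hxy'
      · exact (lexcl hs (Ne.symm hxy') hax).2.1 h2
      · exact (lexcl hs (Ne.symm hxy') hax).2.2.2 h2
  -- y ∈ N
  · rw [mem_char_gt hi hs hay] at hxy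
    rcases hxy with he | he | ⟨hax, h1⟩ | ⟨hax, h1⟩
    · exact absurd he hxa
    · exact absurd he hxy'
    -- x ∈ N : lt y x, lt x a
    · rw [mem_char_gt hi hs h1] at hyx
      rcases hyx with he | he | ⟨h2, -⟩ | ⟨h2, -⟩
      · exact absurd he hya
      · exact absurd he.symm hxy'
      · exact hi x (ht h2 hax)
      · exact (uexcl hs hxy' h2).2.1 hax
    -- x ∈ L : u y x, l x a
    · rw [mem_char_l hs (Ne.symm hxa) (hs.l_symm _ _ h1)] at hyx
      rcases hyx with he | he | ⟨h2, -⟩ | ⟨h2, -⟩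
      · exact absurd he hya
      · exact absurd he.symm hxy'
      · exact (lexcl hs (Ne.symm hya) h2).2.1 hay
      · exact (uexcl hs (Ne.symm hxy') hax).2.2.2 h2
  
end AntisymTotal
section Total

variable {lt u l : S → S → Prop} {a b x y : S}

lemma total_lt (ht : ∀ {x y z : S}, lt x y → lt y z → lt x z) (hi : ∀ x : S, ¬ lt x x)
    (hs : IsSCExt lt u l) (hab : lt a b)
    (hx : x ∈ BSet lt u l a b) (hy : y ∈ BSet lt u l a b) :
    x ∈ BSet lt u l a y ∨ y ∈ BSet lt u l a x := by
  classical
  by_cases hxa : x = a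
  · subst hxa; exact Or.inl (a_mem _ _)
  by_cases hya : y = a
  · subst hya; exact Or.inr (a_mem _ _)
  by_cases hxy' : x = y
  · subst hxy'; exact Or.inl (c_mem _ _)
  have hneab : a ≠ b := fun e => hi a (e ▸ hab)
  rcases classify_lt hi hs hab hx with he | ⟨hax, hxb⟩ | ⟨hax, hxb⟩
  · exact absurd he hxa
  · rcases classify_lt hi hs hab hy with he | ⟨hay, hyb⟩ | ⟨hay, hyb⟩
    · exact absurd he hya
    -- x ∈ P, y ∈ P
    · rcases ex4 hs hxy' with h | h | h | h
      · exact Or.inl ((mem_char_lt hi hs hay).2 (Or.inr (Or.inr (Or.inl ⟨hax, h⟩))))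
      · exact Or.inr ((mem_char_lt hi hs hax).2 (Or.inr (Or.inr (Or.inl ⟨hay, h⟩))))
      · obtain ⟨n1, n2, n3, -⟩ := uexcl hs hxy' h
        exact absurd (hs.l_of_lb x y ⟨hxy', n1, n2⟩ ⟨a, Or.inr hax, Or.inr hay⟩) n3
      · obtain ⟨n1, n2, n3, -⟩ := lexcl hs hxy' h
        exact absurd (hs.u_of_ub x y ⟨hxy', n1, n2⟩ ⟨b, hxb, hyb⟩) n3
    -- x ∈ P, y ∈ U
    · have hybne : y ≠ b := fun e => (ltexcl hs hneab hab).2.1 (e ▸ hay)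
      rcases ex4 hs hxy' with h | h | h | h
      · exact absurd (ht hax h) (uexcl hs (Ne.symm hya) hay).1
      · exact absurd (by rcases (hxb : x = b ∨ lt x b) with rfl | h2
                         · exact h
                         · exact ht h h2) (lexcl hs hybne hyb).1
      · exact Or.inl ((mem_char_u hs (Ne.symm hya) hay).2
          (Or.inr (Or.inr (Or.inr ⟨hs.u_symm _ _ h, hax⟩))))
      · exact Or.inr ((mem_char_lt hi hs hax).2
          (Or.inr (Or.inr (Or.inr ⟨hay, hs.l_symm _ _ h⟩))))
  · have hxbne : x ≠ b := fun e => (ltexcl hs hneab hab).2.1 (e ▸ hax)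
    rcases classify_lt hi hs hab hy with he | ⟨hay, hyb⟩ | ⟨hay, hyb⟩
    · exact absurd he hya
    -- x ∈ U, y ∈ P
    · rcases ex4 hs hxy' with h | h | h | h
      · exact absurd (by rcases (hyb : y = b ∨ lt y b) with rfl | h2
                         · exact h
                         · exact ht h h2) (lexcl hs hxbne hxb).1
      · exact absurd (ht hay h) (uexcl hs (Ne.symm hxa) hax).1
      · exact Or.inr ((mem_char_u hs (Ne.symm hxa) hax).2
          (Or.inr (Or.inr (Or.inr ⟨h, hay⟩))))
      · exact Or.inl ((mem_char_lt hi hs hay).2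
          (Or.inr (Or.inr (Or.inr ⟨hax, h⟩))))
    -- x ∈ U, y ∈ U
    · have hybne : y ≠ b := fun e => (ltexcl hs hneab hab).2.1 (e ▸ hay)
      rcases ex4 hs hxy' with h | h | h | h
      · exact Or.inr ((mem_char_u hs (Ne.symm hxa) hax).2
          (Or.inr (Or.inr (Or.inl ⟨hay, h⟩))))
      · exact Or.inl ((mem_char_u hs (Ne.symm hya) hay).2
          (Or.inr (Or.inr (Or.inl ⟨hax, h⟩))))
      · exact absurd (hs.acyclic x y b h hxb) (lexcl hs hybne hyb).1
      · exact absurd (hs.acyclic x a y (hs.u_symm _ _ hax) h)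
          (uexcl hs (Ne.symm hya) hay).1

lemma total_l (ht : ∀ {x y z : S}, lt x y → lt y z → lt x z) (hi : ∀ x : S, ¬ lt x x)
    (hs : IsSCExt lt u l) (hneab : a ≠ b) (hab : l a b)
    (hx : x ∈ BSet lt u l a b) (hy : y ∈ BSet lt u l a b) :
    x ∈ BSet lt u l a y ∨ y ∈ BSet lt u l a x := by
  classical
  by_cases hxa : x = a
  · subst hxa; exact Or.inl (a_mem _ _)
  by_cases hya : y = a
  · subst hya; exact Or.inr (a_mem _ _)
  by_cases hxy' : x = y
  · subst hxy'; exact Or.inl (c_mem _ _)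
  rcases classify_l hs hneab hab hx with he | ⟨hax, hxb⟩ | ⟨hax, hxb⟩
  · exact absurd he hxa
  · rcases classify_l hs hneab hab hy with he | ⟨hay, hyb⟩ | ⟨hay, hyb⟩
    · exact absurd he hya
    -- x ∈ L, y ∈ L
    · rcases ex4 hs hxy' with h | h | h | h
      · exact Or.inl ((mem_char_l hs (Ne.symm hya) hay).2 (Or.inr (Or.inr (Or.inl ⟨hax, h⟩))))
      · exact Or.inr ((mem_char_l hs (Ne.symm hxa) hax).2 (Or.inr (Or.inr (Or.inl ⟨hay, h⟩))))
      · exact absurd (hs.acyclic x y a h (hs.l_symm _ _ hax)) (lexcl hs (Ne.symm hya) hay).2.1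
      · obtain ⟨n1, n2, n3, -⟩ := lexcl hs hxy' h
        exact absurd (hs.u_of_ub x y ⟨hxy', n1, n2⟩ ⟨b, hxb, hyb⟩) n3
    -- x ∈ L, y ∈ N
    · have hybne : b ≠ y := fun e => (lexcl hs hneab hab).2.1 (e ▸ hay)
      rcases ex4 hs hxy' with h | h | h | h
      · exact absurd (ht h hay) (lexcl hs (Ne.symm hxa) hax).2.1
      · exact absurd (by rcases (hxb : x = b ∨ lt x b) with rfl | h2
                         · exact h
                         · exact ht h h2) (lexcl hs hybne hyb).2.1
      · exact Or.inl ((mem_char_gt hi hs hay).2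
          (Or.inr (Or.inr (Or.inr ⟨hs.u_symm _ _ h, hs.l_symm _ _ hax⟩))))
      · exact Or.inr ((mem_char_l hs (Ne.symm hxa) hax).2
          (Or.inr (Or.inr (Or.inr ⟨h, hay⟩))))
  · have hxbne : b ≠ x := fun e => (lexcl hs hneab hab).2.1 (e ▸ hax)
    rcases classify_l hs hneab hab hy with he | ⟨hay, hyb⟩ | ⟨hay, hyb⟩
    · exact absurd he hya
    -- x ∈ N, y ∈ L
    · rcases ex4 hs hxy' with h | h | h | h
      · exact absurd (by rcases (hyb : y = b ∨ lt y b) with rfl | h2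
                         · exact h
                         · exact ht h h2) (lexcl hs hxbne hxb).2.1
      · exact absurd (ht h hax) (lexcl hs (Ne.symm hya) hay).2.1
      · exact Or.inr ((mem_char_gt hi hs hax).2
          (Or.inr (Or.inr (Or.inr ⟨h, hs.l_symm _ _ hay⟩))))
      · exact Or.inl ((mem_char_l hs (Ne.symm hya) hay).2
          (Or.inr (Or.inr (Or.inr ⟨hs.l_symm _ _ h, hax⟩))))
    -- x ∈ N, y ∈ N
    · have hybne : b ≠ y := fun e => (lexcl hs hneab hab).2.1 (e ▸ hay)
      rcases ex4 hs hxy' with h | h | h | h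
      · exact Or.inr ((mem_char_gt hi hs hax).2 (Or.inr (Or.inr (Or.inl ⟨h, hay⟩))))
      · exact Or.inl ((mem_char_gt hi hs hay).2 (Or.inr (Or.inr (Or.inl ⟨h, hax⟩))))
      · exact absurd (hs.acyclic x y b h (hs.l_symm _ _ hxb)) (lexcl hs hybne hyb).2.1
      · obtain ⟨n1, n2, n3, -⟩ := lexcl hs hxy' h
        exact absurd (hs.u_of_ub x y ⟨hxy', n1, n2⟩ ⟨a, Or.inr hax, Or.inr hay⟩) n3

end Total
section Dual

variable {lt u l : S → S → Prop} {a b c x : S}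

lemma IsSCExt.dual (hs : IsSCExt lt u l) : IsSCExt (fun p q => lt q p) l u := by
  constructor
  · exact hs.l_symm
  · exact hs.u_symm
  · intro x y hne
    obtain ⟨h1, h2, h3, h4⟩ := hs.exactly_one x y hne
    refine ⟨by tauto, ?_, ?_, ?_⟩
    · intro h; exact ⟨fun h' => (h2 h').1 h, (h3 h).2, (h3 h).1⟩
    · intro h; exact ⟨(h2 h).2.2, (h2 h).2.1⟩
    · intro h h'; exact h4 h' h
  · intro x y hinc hub
    obtain ⟨w, hw1, hw2⟩ := hub
    have hw1' : x = w ∨ lt w x := hw1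
    have hw2' : y = w ∨ lt w y := hw2
    exact hs.l_of_lb x y ⟨hinc.1, hinc.2.2, hinc.2.1⟩
      ⟨w, hw1'.elim (fun e => Or.inl e.symm) Or.inr, hw2'.elim (fun e => Or.inl e.symm) Or.inr⟩
  · intro x y hinc hlb
    obtain ⟨w, hw1, hw2⟩ := hlb
    have hw1' : w = x ∨ lt x w := hw1
    have hw2' : w = y ∨ lt y w := hw2
    exact hs.u_of_ub x y ⟨hinc.1, hinc.2.2, hinc.2.1⟩
      ⟨w, hw1'.elim (fun e => Or.inl e.symm) Or.inr, hw2'.elim (fun e => Or.inl e.symm) Or.inr⟩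
  · intro x y z h1 h2
    exact hs.acyclic x z y h2 h1

lemma btwn_dual (hs : IsSCExt lt u l) (a c x : S) :
    Btwn (fun p q => lt q p) l u a c x ↔ Btwn lt u l a c x := by
  simp only [Btwn]
  constructor
  · rintro (⟨h1, ⟨h2, h3⟩ | ⟨h2, h3⟩⟩ | ⟨h1, ⟨h2, h3⟩ | ⟨h2, h3⟩⟩ |
            ⟨h1, ⟨h2, h3⟩ | ⟨h2, h3⟩⟩ | ⟨h1, ⟨h2, h3⟩ | ⟨h2, h3⟩⟩)
    · exact Or.inr (Or.inl ⟨h1, Or.inl ⟨h3, h2⟩⟩)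
    · exact Or.inr (Or.inl ⟨h1, Or.inr ⟨hs.u_symm _ _ h3, hs.l_symm _ _ h2⟩⟩)
    · exact Or.inl ⟨h1, Or.inl ⟨h3, h2⟩⟩
    · exact Or.inl ⟨h1, Or.inr ⟨hs.u_symm _ _ h3, hs.l_symm _ _ h2⟩⟩
    · exact Or.inr (Or.inr (Or.inr ⟨h1, Or.inl ⟨h2, h3⟩⟩))
    · exact Or.inr (Or.inr (Or.inr ⟨h1, Or.inr ⟨h2, h3⟩⟩))
    · exact Or.inr (Or.inr (Or.inl ⟨h1, Or.inl ⟨h2, h3⟩⟩))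
    · exact Or.inr (Or.inr (Or.inl ⟨h1, Or.inr ⟨h2, h3⟩⟩))
  · rintro (⟨h1, ⟨h2, h3⟩ | ⟨h2, h3⟩⟩ | ⟨h1, ⟨h2, h3⟩ | ⟨h2, h3⟩⟩ |
            ⟨h1, ⟨h2, h3⟩ | ⟨h2, h3⟩⟩ | ⟨h1, ⟨h2, h3⟩ | ⟨h2, h3⟩⟩)
    · exact Or.inr (Or.inl ⟨h1, Or.inl ⟨h3, h2⟩⟩)
    · exact Or.inr (Or.inl ⟨h1, Or.inr ⟨hs.l_symm _ _ h3, hs.u_symm _ _ h2⟩⟩)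
    · exact Or.inl ⟨h1, Or.inl ⟨h3, h2⟩⟩
    · exact Or.inl ⟨h1, Or.inr ⟨hs.l_symm _ _ h3, hs.u_symm _ _ h2⟩⟩
    · exact Or.inr (Or.inr (Or.inr ⟨h1, Or.inl ⟨h2, h3⟩⟩))
    · exact Or.inr (Or.inr (Or.inr ⟨h1, Or.inr ⟨h2, h3⟩⟩))
    · exact Or.inr (Or.inr (Or.inl ⟨h1, Or.inl ⟨h2, h3⟩⟩))
    · exact Or.inr (Or.inr (Or.inl ⟨h1, Or.inr ⟨h2, h3⟩⟩))

lemma bset_dual_mem (hs : IsSCExt lt u l) (a c x : S) :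
    x ∈ BSet (fun p q => lt q p) l u a c ↔ x ∈ BSet lt u l a c := by
  simp only [BSet, Set.mem_union, Set.mem_insert_iff, Set.mem_singleton_iff,
    Set.mem_setOf_eq, btwn_dual hs]

end Dual
/-- For `a ≠ b`, the relation `x ⪯ y ↔ x ∈ B_{a,y}` is a total (linear) order
on `B_{a,b}`, with least element `a` and greatest element `b`. -/
theorem stmt6 {S : Type*} [PartialOrder S] (u l : S → S → Prop)
    (hsce : IsSCExt ((· < ·) : S → S → Prop) u l) (a b : S) (hab : a ≠ b) :
    -- reflexivity on `B_{a,b}`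
    (∀ x ∈ BSet ((· < ·) : S → S → Prop) u l a b,
      x ∈ BSet ((· < ·) : S → S → Prop) u l a x) ∧
    -- antisymmetry
    (∀ x ∈ BSet ((· < ·) : S → S → Prop) u l a b,
      ∀ y ∈ BSet ((· < ·) : S → S → Prop) u l a b,
        x ∈ BSet ((· < ·) : S → S → Prop) u l a y →
        y ∈ BSet ((· < ·) : S → S → Prop) u l a x → x = y) ∧
    -- transitivity
    (∀ x ∈ BSet ((· < ·) : S → S → Prop) u l a b,
      ∀ y ∈ BSet ((· < ·) : S → S → Prop) u l a b,
        ∀ z ∈ BSet ((· < ·) : S → S → Prop) u l a b,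
          x ∈ BSet ((· < ·) : S → S → Prop) u l a y →
          y ∈ BSet ((· < ·) : S → S → Prop) u l a z →
          x ∈ BSet ((· < ·) : S → S → Prop) u l a z) ∧
    -- totality
    (∀ x ∈ BSet ((· < ·) : S → S → Prop) u l a b,
      ∀ y ∈ BSet ((· < ·) : S → S → Prop) u l a b,
        x ∈ BSet ((· < ·) : S → S → Prop) u l a y ∨
        y ∈ BSet ((· < ·) : S → S → Prop) u l a x) ∧
    -- `a` is the least element
    (∀ x ∈ BSet ((· < ·) : S → S → Prop) u l a b,
      a ∈ BSet ((· < ·) : S → S → Prop) u l a x) ∧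
    -- `b` is the greatest element
    (∀ x ∈ BSet ((· < ·) : S → S → Prop) u l a b,
      x ∈ BSet ((· < ·) : S → S → Prop) u l a b) := by
  have ht : ∀ {p q r : S}, p < q → q < r → p < r := fun h h' => lt_trans h h'
  have hi : ∀ p : S, ¬ p < p := fun p => lt_irrefl p
  have ht' : ∀ {p q r : S}, (fun s t : S => (· < ·) t s) p q →
      (fun s t : S => (· < ·) t s) q r → (fun s t : S => (· < ·) t s) p r :=
    fun h h' => lt_trans h' h
  have hi' : ∀ p : S, ¬ (fun s t : S => (· < ·) t s) p p := fun p => lt_irrefl p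
  have hd := hsce.dual
  have hm := bset_dual_mem hsce
  refine ⟨fun x _ => c_mem a x, ?_, ?_, ?_, fun x _ => a_mem a x, fun x hx => hx⟩
  · intro x hx y hy hxy hyx
    rcases ex4 hsce hab with h | h | h | h
    · exact antisym_lt (lt := ((· < ·) : S → S → Prop)) (u := u) (l := l) ht hi hsce h hx hy hxy hyx
    · exact antisym_lt (lt := (fun s t : S => (· < ·) t s)) (u := l) (l := u) ht' hi' hd h ((hm a b x).mpr hx) ((hm a b y).mpr hy)
        ((hm a y x).mpr hxy) ((hm a x y).mpr hyx)
    · exact antisym_l (lt := (fun s t : S => (· < ·) t s)) (u := l) (l := u) ht' hi' hd hab h ((hm a b x).mpr hx) ((hm a b y).mpr hy)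
        ((hm a y x).mpr hxy) ((hm a x y).mpr hyx)
    · exact antisym_l (lt := ((· < ·) : S → S → Prop)) (u := u) (l := l) ht hi hsce hab h hx hy hxy hyx
  · intro x hx y hy z hz hxy hyz
    rcases ex4 hsce hab with h | h | h | h
    · exact trans_lt (lt := ((· < ·) : S → S → Prop)) (u := u) (l := l) ht hi hsce h hx hy hz hxy hyz
    · exact (hm a z x).mp (trans_lt (lt := (fun s t : S => (· < ·) t s)) (u := l) (l := u) ht' hi' hd h ((hm a b x).mpr hx) ((hm a b y).mpr hy)
        ((hm a b z).mpr hz) ((hm a y x).mpr hxy) ((hm a z y).mpr hyz))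
    · exact (hm a z x).mp (trans_l (lt := (fun s t : S => (· < ·) t s)) (u := l) (l := u) ht' hi' hd hab h ((hm a b x).mpr hx) ((hm a b y).mpr hy)
        ((hm a b z).mpr hz) ((hm a y x).mpr hxy) ((hm a z y).mpr hyz))
    · exact trans_l (lt := ((· < ·) : S → S → Prop)) (u := u) (l := l) ht hi hsce hab h hx hy hz hxy hyz
  · intro x hx y hy
    rcases ex4 hsce hab with h | h | h | h
    · exact total_lt (lt := ((· < ·) : S → S → Prop)) (u := u) (l := l) ht hi hsce h hx hy
    · exact (total_lt (lt := (fun s t : S => (· < ·) t s)) (u := l) (l := u) ht' hi' hd h ((hm a b x).mpr hx) ((hm a b y).mpr hy)).imp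
        (hm a y x).mp (hm a x y).mp
    · exact (total_l (lt := (fun s t : S => (· < ·) t s)) (u := l) (l := u) ht' hi' hd hab h ((hm a b x).mpr hx) ((hm a b y).mpr hy)).imp
        (hm a y x).mp (hm a x y).mp
    · exact total_l (lt := ((· < ·) : S → S → Prop)) (u := u) (l := l) ht hi hsce hab h hx hy

end PaperSC
end
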